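/- arXiv:2108.02638 — 4 statements merged into one kernel-verified Lean document; each statement's English description precedes it below -/
import Mathlib

section
/- There exist constants c₁, c₂, c₃ > 0 such that the following holds. For every finite simple graph G on n ≥ 2 vertices and every integer k ≥ 1, G admits a weak (⌈c₁·log₂ n⌉, ⌈c₂·k·(log₂ n)³⌉)-network decomposition with cluster distance k and congestion ⌈c₃·(log₂ n)²·min{k, (log₂ n)²}⌉. -/
open SimpleGraph
open scoped Classical




/-- `FarApart G k A B` : the `G`-distance between the vertex sets `A` and `B` is
strictly greater than `k`, i.e. every walk between a vertex of `A` and a vertex of `B`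
has length greater than `k`. -/
def FarApart {V : Type} (G : SimpleGraph V) (k : ℕ) (A B : Set V) : Prop :=
  ∀ u ∈ A, ∀ v ∈ B, ∀ p : G.Walk u v, k < p.length

/-- A cluster collection with Steiner radius `β` and congestion `κ` in `G`:
pairwise disjoint clusters, each contained in an associated connected Steiner subgraph
in which any two vertices are joined by a path of length at most `β`, and every edge of
`G` lies in at most `κ` of the Steiner subgraphs. -/
structure ClusterCollection {V : Type} (G : SimpleGraph V) (β κ : ℕ) where
  p : ℕ
  cluster : Fin p → Set V
  tree : Fin p → G.Subgraph
  disjoint : ∀ i j, i ≠ j → Disjoint (cluster i) (cluster j)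
  subset_tree : ∀ i, cluster i ⊆ (tree i).verts
  connected : ∀ i, ((tree i).coe).Preconnected
  radius : ∀ i, ∀ u v : (tree i).verts, ∃ w : ((tree i).coe).Walk u v, w.length ≤ β
  congestion : ∀ e ∈ G.edgeSet, {i : Fin p | e ∈ (tree i).edgeSet}.ncard ≤ κ

/-- A weak `(C, β)`-network decomposition with cluster distance `k` and congestion `κ`:
a partition of the vertices into `C` cluster collections (color classes), each with
Steiner radius `β` and congestion `κ`, such that any two distinct clusters of the same
color class are at `G`-distance strictly greater than `k`. -/
structure NetworkDecomposition {V : Type} (G : SimpleGraph V) (C β κ k : ℕ) where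
  coll : Fin C → ClusterCollection G β κ
  cover : ∀ v : V, ∃! ci : (c : Fin C) × Fin (coll c).p, v ∈ (coll ci.1).cluster ci.2
  sep : ∀ c : Fin C, ∀ i j : Fin (coll c).p, i ≠ j →
    FarApart G k ((coll c).cluster i) ((coll c).cluster j)



section Helpers
variable {V : Type} [DecidableEq V] {G : SimpleGraph V}

lemma walk_transfer {H : G.Subgraph} :
    ∀ {u v : V} (p : G.Walk u v), p.toSubgraph ≤ H → ∀ (hu : u ∈ H.verts) (hv : v ∈ H.verts),
      ∃ q : H.coe.Walk ⟨u, hu⟩ ⟨v, hv⟩, q.length = p.length := by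
  intro u v p
  induction p with
  | nil => intro _ hu hv; exact ⟨Walk.nil, rfl⟩
  | @cons a b c h p ih =>
    intro hle hu hv
    rw [Walk.toSubgraph] at hle
    have h1 : G.subgraphOfAdj h ≤ H := le_trans le_sup_left hle
    have h2 : p.toSubgraph ≤ H := le_trans le_sup_right hle
    have hadj : H.Adj a b := h1.2 (by simp)
    have hb : b ∈ H.verts := H.edge_vert hadj.symm
    obtain ⟨q, hq⟩ := ih h2 hb hv
    exact ⟨Walk.cons (by exact hadj) q, by exact congrArg (· + 1) hq⟩

lemma length_split {u v w : V} (p : G.Walk u v)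
    (h : w ∈ p.support) :
    (p.takeUntil w h).length + (p.dropUntil w h).length = p.length := by
  have := congrArg Walk.length (p.take_spec h)
  rwa [Walk.length_append] at this

lemma dropUntil_toSubgraph_le {u v w : V} (p : G.Walk u v)
    (h : w ∈ p.support) : (p.dropUntil w h).toSubgraph ≤ p.toSubgraph := by
  conv_rhs => rw [← p.take_spec h]
  rw [Walk.toSubgraph_append]
  exact le_sup_right

end Helpers

/-- a Steiner tree for cluster `cl`: contains the cluster, preconnected, all pairs of
its vertices joined inside by walks of length ≤ `D`, and every vertex of the tree is
within `G`-distance `k` of the cluster. -/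
def GoodTree {V : Type} (G : SimpleGraph V) (k D : ℕ) (cl : Finset V) (T : G.Subgraph) : Prop :=
  (↑cl : Set V) ⊆ T.verts ∧ T.coe.Preconnected ∧
  (∀ u v : T.verts, ∃ w : T.coe.Walk u v, w.length ≤ D) ∧
  (∀ x ∈ T.verts, ∃ a ∈ cl, ∃ p : G.Walk x a, p.length ≤ k)

/-- every walk between the two sets has length > 2k -/
def Sep2 {V : Type} (G : SimpleGraph V) (k : ℕ) (A B : Finset V) : Prop :=
  ∀ a ∈ A, ∀ b ∈ B, ∀ p : G.Walk a b, 2 * k < p.length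

lemma carve {V : Type} [Fintype V] [DecidableEq V] (G : SimpleGraph V) (k : ℕ)
    (W : Finset V) {v : V} (hv : v ∈ W) :
    ∃ (cl fat : Finset V) (T : G.Subgraph),
      v ∈ cl ∧ cl ⊆ fat ∧ fat ⊆ W ∧ fat.card ≤ 2 * cl.card ∧
      (∀ w ∈ W, ∀ a ∈ cl, ∀ p : G.Walk w a, p.length ≤ 2 * k → w ∈ fat) ∧
      GoodTree G k (4 * k * (Nat.log 2 (Fintype.card V) + 1)) cl T := by
  classical
  set n := Fintype.card V with hn
  set L := Nat.log 2 n with hL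
  -- iterated fattening
  let S : ℕ → Finset V := fun j => Nat.rec ({v} : Finset V)
    (fun _ Sp => W.filter (fun w => ∃ a ∈ Sp, ∃ p : G.Walk w a, p.length ≤ 2 * k)) j
  have hS0 : S 0 = {v} := rfl
  have hSsucc : ∀ j, S (j + 1) =
      W.filter (fun w => ∃ a ∈ S j, ∃ p : G.Walk w a, p.length ≤ 2 * k) := fun _ => rfl
  have hSW : ∀ j, S j ⊆ W := by
    intro j
    cases j with
    | zero => rw [hS0]; simpa using hv
    | succ j => rw [hSsucc]; exact Finset.filter_subset _ _
  have hmono : ∀ j, S j ⊆ S (j + 1) := by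
    intro j w hw
    rw [hSsucc, Finset.mem_filter]
    exact ⟨hSW j hw, w, hw, Walk.nil, by simp⟩
  have hchain : Monotone S := monotone_nat_of_le_succ (fun j => hmono j)
  have hcard : ∃ J, J ≤ L ∧ (S (J + 1)).card ≤ 2 * (S J).card := by
    by_contra hcon
    push_neg at hcon
    have hgrow : ∀ j, j ≤ L + 1 → 2 ^ j ≤ (S j).card := by
      intro j
      induction j with
      | zero => intro _; simp [hS0]
      | succ j ih =>
        intro hj
        have h1 : 2 ^ j ≤ (S j).card := ih (by omega)
        have h2 : 2 * (S j).card < (S (j + 1)).card := hcon j (by omega)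
        calc 2 ^ (j + 1) = 2 * 2 ^ j := by ring
        _ ≤ 2 * (S j).card := by omega
        _ ≤ (S (j + 1)).card := by omega
    have h1 : 2 ^ (L + 1) ≤ (S (L + 1)).card := hgrow _ le_rfl
    have h2 : (S (L + 1)).card ≤ n := by
      rw [hn]; exact le_trans (Finset.card_le_card (hSW (L+1))) (Finset.card_le_univ W)
    have h3 : n < 2 ^ (L + 1) := Nat.lt_pow_succ_log_self one_lt_two n
    omega
  obtain ⟨J, hJL, hJcard⟩ := hcard
  have hvJ : v ∈ S J := hchain (Nat.zero_le J) (by simp [hS0])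
  -- level function
  set Lev : V → ℕ := fun w => @dite _ (∃ j, w ∈ S j) (Classical.propDecidable _) (fun h => @Nat.find _ (Classical.decPred _) h) (fun _ => 0) with hLev
  have hLev_eq : ∀ w (h : ∃ j, w ∈ S j), Lev w = @Nat.find _ (Classical.decPred _) h := by
    intro w h
    rw [hLev]
    exact dif_pos h
  have hLev_le : ∀ j w, w ∈ S j → Lev w ≤ j := by
    intro j w hw
    rw [hLev_eq w ⟨j, hw⟩]
    exact @Nat.find_le j (fun n => w ∈ S n) (Classical.decPred _) ⟨j, hw⟩ hw
  have hLev_mem : ∀ w, w ∈ S J → w ∈ S (Lev w) := by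
    intro w hw
    rw [hLev_eq w ⟨J, hw⟩]
    exact @Nat.find_spec (fun n => w ∈ S n) (Classical.decPred _) ⟨J, hw⟩
  have hLev_pos : ∀ w, w ∈ S J → w ≠ v → 1 ≤ Lev w := by
    intro w hw hwv
    by_contra hcon
    have h0 : Lev w = 0 := by omega
    have := hLev_mem w hw
    rw [h0, hS0, Finset.mem_singleton] at this
    exact hwv this
  -- selection of parent walks
  have hsel : ∀ w, w ∈ S J → ∃ (u : V) (q : G.Walk w u), q.length ≤ 2 * k ∧ u ∈ S J ∧
      (w ≠ v → Lev u < Lev w) ∧ (w = v → q.length = 0) := by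
    intro w hw
    by_cases hwv : w = v
    · subst hwv
      exact ⟨w, Walk.nil, by simp, hw, fun h => absurd rfl h, fun _ => rfl⟩
    · have h1 : 1 ≤ Lev w := hLev_pos w hw hwv
      obtain ⟨m, hm⟩ : ∃ m, Lev w = m + 1 := ⟨Lev w - 1, by omega⟩
      have hwS : w ∈ S (m + 1) := hm ▸ hLev_mem w hw
      rw [hSsucc, Finset.mem_filter] at hwS
      obtain ⟨-, a, ha, p, hp⟩ := hwS
      have hmJ : m < J := by
        have := hLev_le J w hw
        omega
      refine ⟨a, p, hp, hchain (le_of_lt hmJ) ha, fun _ => ?_, fun h => absurd h hwv⟩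
      have := hLev_le m a ha
      omega
  choose pu pq hqlen hpuS hlt hnil using hsel
  -- the Steiner tree
  set T : G.Subgraph := ⨆ w : {x // x ∈ S J}, (pq w.1 w.2).toSubgraph with hT
  have hTle : ∀ w (hw : w ∈ S J), (pq w hw).toSubgraph ≤ T := by
    intro w hw
    exact le_iSup (fun w : {x // x ∈ S J} => (pq w.1 w.2).toSubgraph) ⟨w, hw⟩
  have hmemT : ∀ w (hw : w ∈ S J), w ∈ T.verts := by
    intro w hw
    exact (hTle w hw).1 ((pq w hw).start_mem_verts_toSubgraph)
  have hvT : v ∈ T.verts := hmemT v hvJ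
  -- walk to center
  have hctr : ∀ m w (hw : w ∈ S J), Lev w ≤ m →
      ∃ r : T.coe.Walk ⟨w, hmemT w hw⟩ ⟨v, hvT⟩, r.length ≤ 2 * k * (Lev w) := by
    intro m
    induction m with
    | zero =>
      intro w hw hm
      by_cases hwv : w = v
      · subst hwv
        exact ⟨Walk.nil, by simp⟩
      · exact absurd (hLev_pos w hw hwv) (by omega)
    | succ m ih =>
      intro w hw hm
      by_cases hwv : w = v
      · subst hwv
        exact ⟨Walk.nil, by simp⟩
      · have hu := hpuS w hw
        have hlt' := hlt w hw hwv
        obtain ⟨r', hr'⟩ := ih (pu w hw) hu (by omega)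
        obtain ⟨q1, hq1⟩ := walk_transfer (pq w hw) (hTle w hw) (hmemT w hw) (hmemT _ hu)
        refine ⟨q1.append r', ?_⟩
        rw [Walk.length_append, hq1]
        have h2 : (pq w hw).length ≤ 2 * k := hqlen w hw
        have h3 : Lev (pu w hw) ≤ Lev w - 1 := by omega
        have h4 : 2 * k * Lev (pu w hw) ≤ 2 * k * (Lev w - 1) := Nat.mul_le_mul_left _ h3
        have h5 : 1 ≤ Lev w := hLev_pos w hw hwv
        have h6 : 2 * k + 2 * k * (Lev w - 1) = 2 * k * Lev w := by
          cases' Nat.exists_eq_add_of_le h5 with t ht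
          rw [ht, Nat.add_sub_cancel_left]
          ring
        omega
  -- every tree vertex reaches the center
  have hreach : ∀ x (hx : x ∈ T.verts),
      ∃ r : T.coe.Walk ⟨x, hx⟩ ⟨v, hvT⟩, r.length ≤ 2 * k * (J + 1) := by
    intro x hx
    have hx' : x ∈ T.verts := hx
    rw [hT, Subgraph.verts_iSup, Set.mem_iUnion] at hx'
    obtain ⟨⟨w, hw⟩, hxw⟩ := hx'
    rw [Walk.mem_verts_toSubgraph] at hxw
    have hu := hpuS w hw
    obtain ⟨r1, hr1⟩ := walk_transfer ((pq w hw).dropUntil x hxw)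
      (le_trans (dropUntil_toSubgraph_le _ _) (hTle w hw)) hx (hmemT _ hu)
    obtain ⟨r2, hr2⟩ := hctr J (pu w hw) hu (hLev_le J _ hu)
    refine ⟨r1.append r2, ?_⟩
    rw [Walk.length_append, hr1]
    have h1 : ((pq w hw).dropUntil x hxw).length ≤ (pq w hw).length :=
      Walk.length_dropUntil_le _ hxw
    have h2 := hqlen w hw
    have h3 : Lev (pu w hw) ≤ J := hLev_le J _ hu
    have h4 : 2 * k * Lev (pu w hw) ≤ 2 * k * J := Nat.mul_le_mul_left _ h3
    have : 2 * k + 2 * k * J = 2 * k * (J + 1) := by ring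
    omega
  refine ⟨S J, S (J + 1), T, hvJ, hmono J, hSW (J + 1), hJcard, ?_, ?_, ?_, ?_, ?_⟩
  · -- fattening property
    intro w hwW a ha p hp
    rw [hSsucc, Finset.mem_filter]
    exact ⟨hwW, a, ha, p, hp⟩
  · -- cluster ⊆ tree verts
    intro x hx
    exact hmemT x hx
  · -- preconnected
    intro x y
    obtain ⟨x, hx⟩ := x
    obtain ⟨y, hy⟩ := y
    obtain ⟨r1, -⟩ := hreach x hx
    obtain ⟨r2, -⟩ := hreach y hy
    exact ⟨r1.append r2.reverse⟩
  · -- radius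
    intro x y
    obtain ⟨x, hx⟩ := x
    obtain ⟨y, hy⟩ := y
    obtain ⟨r1, hr1⟩ := hreach x hx
    obtain ⟨r2, hr2⟩ := hreach y hy
    refine ⟨r1.append r2.reverse, ?_⟩
    rw [Walk.length_append, Walk.length_reverse]
    have hJL' : 2 * k * (J + 1) ≤ 2 * k * (L + 1) := by
      apply Nat.mul_le_mul_left
      omega
    have : 4 * k * (L + 1) = 2 * k * (L + 1) + 2 * k * (L + 1) := by ring
    omega
  · -- proximity to cluster
    intro x hx
    have hx' : x ∈ T.verts := hx
    rw [hT, Subgraph.verts_iSup, Set.mem_iUnion] at hx'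
    obtain ⟨⟨w, hw⟩, hxw⟩ := hx'
    rw [Walk.mem_verts_toSubgraph] at hxw
    have hsplit := length_split (pq w hw) hxw
    have hlen := hqlen w hw
    by_cases hcase : ((pq w hw).takeUntil x hxw).length ≤ k
    · exact ⟨w, hw, ((pq w hw).takeUntil x hxw).reverse, by rwa [Walk.length_reverse]⟩
    · exact ⟨pu w hw, hpuS w hw, (pq w hw).dropUntil x hxw, by omega⟩
lemma phase {V : Type} [Fintype V] [DecidableEq V] (G : SimpleGraph V) (k : ℕ) :
    ∀ (m : ℕ) (W : Finset V), W.card ≤ m →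
    ∃ (Lp : List (Finset V × G.Subgraph)) (W' : Finset V),
      (∀ pr ∈ Lp, pr.1 ⊆ W ∧ GoodTree G k (4 * k * (Nat.log 2 (Fintype.card V) + 1)) pr.1 pr.2) ∧
      List.Pairwise (fun a b => Sep2 G k a.1 b.1) Lp ∧
      W' ⊆ W ∧ 2 * W'.card ≤ W.card ∧
      (∀ w, w ∈ W ↔ (w ∈ W' ∨ ∃ pr ∈ Lp, w ∈ pr.1)) ∧
      (∀ pr ∈ Lp, ∀ w ∈ pr.1, w ∉ W') := by
  intro m
  induction m with
  | zero =>
    intro W hW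
    have : W = ∅ := Finset.card_eq_zero.mp (by omega)
    subst this
    exact ⟨[], ∅, by simp, by simp, by simp, by simp, by simp, by simp⟩
  | succ m ih =>
    intro W hW
    rcases Finset.eq_empty_or_nonempty W with hW0 | ⟨v, hv⟩
    · subst hW0
      exact ⟨[], ∅, by simp, by simp, by simp, by simp, by simp, by simp⟩
    · obtain ⟨cl, fat, T, hvcl, hclfat, hfatW, hfatcard, hfatprop, hgood⟩ := carve G k W hv
      have hfatne : v ∈ fat := hclfat hvcl
      have hWfat : (W \ fat).card < W.card := by
        apply Finset.card_lt_card
        rw [Finset.ssubset_iff_of_subset (Finset.sdiff_subset)]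
        exact ⟨v, hfatW hfatne, by simp [hfatne]⟩
      obtain ⟨Lp', W'', hg', hpw', hsub', hhalf', hcov', hnot'⟩ := ih (W \ fat) (by omega)
      refine ⟨(cl, T) :: Lp', W'' ∪ (fat \ cl), ?_, ?_, ?_, ?_, ?_, ?_⟩
      · intro pr hpr
        rcases List.mem_cons.mp hpr with rfl | hpr
        · exact ⟨le_trans hclfat hfatW, hgood⟩
        · exact ⟨le_trans (hg' pr hpr).1 (Finset.sdiff_subset), (hg' pr hpr).2⟩
      · refine List.Pairwise.cons ?_ hpw'
        intro pr hpr a ha b hb p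
        have hbW : b ∈ W \ fat := (hg' pr hpr).1 hb
        by_contra hcon
        push_neg at hcon
        have : b ∈ fat := hfatprop b (Finset.sdiff_subset hbW) a ha p.reverse
          (by rw [Walk.length_reverse]; omega)
        exact (Finset.mem_sdiff.mp hbW).2 this
      · exact Finset.union_subset (le_trans hsub' Finset.sdiff_subset)
          (le_trans Finset.sdiff_subset hfatW)
      · have e1 : (W \ fat).card + fat.card = W.card :=
          Finset.card_sdiff_add_card_eq_card hfatW
        have e2 : (fat \ cl).card + cl.card = fat.card :=
          Finset.card_sdiff_add_card_eq_card hclfat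
        have e3 : (W'' ∪ (fat \ cl)).card ≤ W''.card + (fat \ cl).card :=
          Finset.card_union_le _ _
        omega
      · intro w
        constructor
        · intro hw
          by_cases hwf : w ∈ fat
          · by_cases hwc : w ∈ cl
            · exact Or.inr ⟨(cl, T), by simp, hwc⟩
            · exact Or.inl (Finset.mem_union_right _ (Finset.mem_sdiff.mpr ⟨hwf, hwc⟩))
          · rcases (hcov' w).mp (Finset.mem_sdiff.mpr ⟨hw, hwf⟩) with h | ⟨pr, hpr, hwpr⟩
            · exact Or.inl (Finset.mem_union_left _ h)
            · exact Or.inr ⟨pr, List.mem_cons_of_mem _ hpr, hwpr⟩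
        · intro hw
          rcases hw with hw | ⟨pr, hpr, hwpr⟩
          · rcases Finset.mem_union.mp hw with h | h
            · exact Finset.sdiff_subset (hsub' h)
            · exact hfatW (Finset.sdiff_subset h)
          · rcases List.mem_cons.mp hpr with rfl | hpr
            · exact hfatW (hclfat hwpr)
            · exact Finset.sdiff_subset ((hg' pr hpr).1 hwpr)
      · intro pr hpr w hwpr
        rcases List.mem_cons.mp hpr with rfl | hpr
        · intro hcon
          rcases Finset.mem_union.mp hcon with h | h
          · exact (Finset.mem_sdiff.mp (hsub' h)).2 (hclfat hwpr)
          · exact (Finset.mem_sdiff.mp h).2 hwpr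
        · intro hcon
          have hwWf : w ∈ W \ fat := (hg' pr hpr).1 hwpr
          rcases Finset.mem_union.mp hcon with h | h
          · exact hnot' pr hpr w hwpr h
          · exact (Finset.mem_sdiff.mp hwWf).2 (Finset.sdiff_subset h)
lemma decompose {V : Type} [Fintype V] [DecidableEq V] (G : SimpleGraph V) (k : ℕ) :
    ∀ (m : ℕ) (R : Finset V), R.card ≤ 2 ^ m →
    ∃ Ls : List (List (Finset V × G.Subgraph)),
      Ls.length ≤ m + 1 ∧
      (∀ Lp ∈ Ls,
        (∀ pr ∈ Lp, GoodTree G k (4 * k * (Nat.log 2 (Fintype.card V) + 1)) pr.1 pr.2) ∧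
        List.Pairwise (fun a b => Sep2 G k a.1 b.1) Lp) ∧
      (∀ w, w ∈ R ↔ ∃ Lp ∈ Ls, ∃ pr ∈ Lp, w ∈ pr.1) ∧
      List.Pairwise (fun L1 L2 => ∀ pr ∈ L1, ∀ pr' ∈ L2, Disjoint pr.1 pr'.1) Ls := by
  intro m
  induction m with
  | zero =>
    intro R hR
    rcases Finset.eq_empty_or_nonempty R with rfl | hne
    · exact ⟨[], by simp, by simp, by simp, by simp⟩
    · obtain ⟨Lp, W', hg, hpw, hsub, hhalf, hcov, hnot⟩ := phase G k R.card R le_rfl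
      have hW'0 : W' = ∅ := Finset.card_eq_zero.mp (by omega)
      subst hW'0
      refine ⟨[Lp], by simp, ?_, ?_, by simp⟩
      · intro Lp' hLp'
        rw [List.mem_singleton] at hLp'
        subst hLp'
        exact ⟨fun pr hpr => (hg pr hpr).2, hpw⟩
      · intro w
        rw [hcov w]
        simp
  | succ m ih =>
    intro R hR
    rcases Finset.eq_empty_or_nonempty R with rfl | hne
    · exact ⟨[], by simp, by simp, by simp, by simp⟩
    · obtain ⟨Lp, W', hg, hpw, hsub, hhalf, hcov, hnot⟩ := phase G k R.card R le_rfl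
      have hW' : W'.card ≤ 2 ^ m := by
        have : 2 ^ (m + 1) = 2 * 2 ^ m := by ring
        omega
      obtain ⟨Ls', hlen', hg', hcov', hpw'⟩ := ih W' hW'
      refine ⟨Lp :: Ls', by simpa using hlen', ?_, ?_, ?_⟩
      · intro Lp' hLp'
        rcases List.mem_cons.mp hLp' with rfl | hLp'
        · exact ⟨fun pr hpr => (hg pr hpr).2, hpw⟩
        · exact hg' Lp' hLp'
      · intro w
        constructor
        · intro hw
          rcases (hcov w).mp hw with hw' | ⟨pr, hpr, hwpr⟩
          · obtain ⟨Lp', hLp', pr, hpr, hwpr⟩ := (hcov' w).mp hw'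
            exact ⟨Lp', List.mem_cons_of_mem _ hLp', pr, hpr, hwpr⟩
          · exact ⟨Lp, List.mem_cons_self, pr, hpr, hwpr⟩
        · rintro ⟨Lp', hLp', pr, hpr, hwpr⟩
          rcases List.mem_cons.mp hLp' with rfl | hLp'
          · exact (hcov w).mpr (Or.inr ⟨pr, hpr, hwpr⟩)
          · exact hsub ((hcov' w).mpr ⟨Lp', hLp', pr, hpr, hwpr⟩)
      · refine List.Pairwise.cons ?_ hpw'
        intro Lp' hLp' pr hpr pr' hpr'
        rw [Finset.disjoint_left]
        intro a hapr hapr'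
        have haW' : a ∈ W' := (hcov' a).mpr ⟨Lp', hLp', pr', hpr', hapr'⟩
        exact hnot pr hpr a hapr haW'
noncomputable def mkColl {V : Type} (G : SimpleGraph V) {k D β κ : ℕ} (hβ : D ≤ β) (hκ : 1 ≤ κ)
    (Lp : List (Finset V × G.Subgraph))
    (hg : ∀ pr ∈ Lp, GoodTree G k D pr.1 pr.2)
    (hpw : List.Pairwise (fun a b => Sep2 G k a.1 b.1) Lp) :
    ClusterCollection G β κ where
  p := Lp.length
  cluster i := ↑(Lp.get i).1
  tree i := (Lp.get i).2
  disjoint i j hij := by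
    rw [Set.disjoint_left]
    intro a hai haj
    have hai' : a ∈ (Lp.get i).1 := hai
    have haj' : a ∈ (Lp.get j).1 := haj
    rcases lt_or_gt_of_ne (fun h : (i : ℕ) = (j : ℕ) => hij (Fin.ext h)) with hlt | hlt
    · exact absurd ((List.pairwise_iff_get.mp hpw i j hlt) a hai' a haj' Walk.nil) (by simp)
    · exact absurd ((List.pairwise_iff_get.mp hpw j i hlt) a haj' a hai' Walk.nil) (by simp)
  subset_tree i := (hg _ (Lp.get_mem i)).1
  connected i := (hg _ (Lp.get_mem i)).2.1
  radius i u v := by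
    obtain ⟨w, hw⟩ := (hg _ (Lp.get_mem i)).2.2.1 u v
    exact ⟨w, le_trans hw hβ⟩
  congestion e he := by
    refine le_trans ((Set.ncard_le_one_iff (Set.toFinite _)).mpr ?_) hκ
    intro i j hi hj
    induction e using Sym2.ind with
    | _ x y =>
    simp only [Set.mem_setOf_eq, Subgraph.mem_edgeSet] at hi hj
    have hxi : x ∈ (Lp.get i).2.verts := (Lp.get i).2.edge_vert hi
    have hxj : x ∈ (Lp.get j).2.verts := (Lp.get j).2.edge_vert hj
    obtain ⟨a, ha, p1, hp1⟩ := (hg _ (Lp.get_mem i)).2.2.2 x hxi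
    obtain ⟨b, hb, p2, hp2⟩ := (hg _ (Lp.get_mem j)).2.2.2 x hxj
    by_contra hij
    rcases lt_or_gt_of_ne (fun h : (i : ℕ) = (j : ℕ) => hij (Fin.ext h)) with hlt | hlt
    · have := (List.pairwise_iff_get.mp hpw i j hlt) a ha b hb (p1.reverse.append p2)
      rw [Walk.length_append, Walk.length_reverse] at this
      omega
    · have := (List.pairwise_iff_get.mp hpw j i hlt) b hb a ha (p2.reverse.append p1)
      rw [Walk.length_append, Walk.length_reverse] at this
      omega


lemma get_congr {α : Type} {l l' : List α} (h : l = l') {i : Fin l.length} {j : Fin l'.length}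
    (hij : (i : ℕ) = (j : ℕ)) : l.get i = l'.get j := by
  subst h
  congr 1
  exact Fin.ext hij

theorem statement0' :
    ∃ c₁ c₂ c₃ : ℝ, 0 < c₁ ∧ 0 < c₂ ∧ 0 < c₃ ∧
      ∀ (V : Type) [Fintype V] (G : SimpleGraph V),
        2 ≤ Fintype.card V →
        ∀ k : ℕ, 1 ≤ k →
          Nonempty (NetworkDecomposition G
            ⌈c₁ * Real.logb 2 (Fintype.card V)⌉₊
            ⌈c₂ * k * (Real.logb 2 (Fintype.card V)) ^ 3⌉₊
            ⌈c₃ * (Real.logb 2 (Fintype.card V)) ^ 2 *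
              min (k : ℝ) ((Real.logb 2 (Fintype.card V)) ^ 2)⌉₊
            k) := by
  refine ⟨3, 8, 1, by norm_num, by norm_num, by norm_num, ?_⟩
  intro V _ G hn k hk
  classical
  set n := Fintype.card V with hn'
  set L := Nat.log 2 n with hLdef
  set x := Real.logb 2 (n : ℝ) with hxdef
  have hx1 : (1 : ℝ) ≤ x := by
    rw [hxdef, ← Real.logb_self_eq_one (b := 2) (by norm_num)]
    apply Real.logb_le_logb_of_le (by norm_num) (by norm_num)
    exact_mod_cast hn
  have hLx : (L : ℝ) ≤ x := Real.natLog_le_logb n 2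
  have hL1 : 1 ≤ L := Nat.log_pos (by norm_num) hn
  set C := ⌈(3 : ℝ) * x⌉₊ with hCdef
  set β := ⌈(8 : ℝ) * k * x ^ 3⌉₊ with hβdef
  set κ := ⌈(1 : ℝ) * x ^ 2 * min (k : ℝ) (x ^ 2)⌉₊ with hκdef
  have hk1 : (1 : ℝ) ≤ (k : ℝ) := by exact_mod_cast hk
  have hCge : L + 2 ≤ C := by
    have h1 : ((L + 2 : ℕ) : ℝ) ≤ 3 * x := by
      push_cast
      nlinarith
    have := Nat.ceil_mono h1
    rwa [Nat.ceil_natCast] at this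
  have hβge : 4 * k * (L + 1) ≤ β := by
    have h1 : ((4 * k * (L + 1) : ℕ) : ℝ) ≤ 8 * k * x ^ 3 := by
      push_cast
      have hLreal : (1 : ℝ) ≤ (L : ℝ) := by exact_mod_cast hL1
      nlinarith [sq_nonneg x, sq_nonneg (x - 1), mul_pos (lt_of_lt_of_le one_pos hk1)
        (lt_of_lt_of_le one_pos hx1)]
    have := Nat.ceil_mono h1
    rwa [Nat.ceil_natCast] at this
  have hκge : 1 ≤ κ := by
    rw [hκdef, Nat.one_le_ceil_iff]
    have : (1 : ℝ) ≤ min (k : ℝ) (x ^ 2) := le_min hk1 (by nlinarith)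
    nlinarith
  have hcard : (Finset.univ : Finset V).card ≤ 2 ^ (L + 1) := by
    rw [Finset.card_univ]
    exact le_of_lt (Nat.lt_pow_succ_log_self one_lt_two n)
  obtain ⟨Ls, hlen, hg, hcov, hpw⟩ := decompose G k (L + 1) Finset.univ hcard
  have hlenC : Ls.length ≤ C := by omega
  set Ls' := Ls ++ List.replicate (C - Ls.length) ([] : List (Finset V × G.Subgraph))
    with hLs'def
  have hlen' : Ls'.length = C := by
    rw [hLs'def, List.length_append, List.length_replicate]
    omega
  have hmem' : ∀ Lp ∈ Ls', Lp ∈ Ls ∨ Lp = [] := by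
    intro Lp hLp
    rw [hLs'def, List.mem_append] at hLp
    rcases hLp with h | h
    · exact Or.inl h
    · exact Or.inr (List.eq_of_mem_replicate h)
  have hg' : ∀ Lp ∈ Ls',
      (∀ pr ∈ Lp, GoodTree G k (4 * k * (L + 1)) pr.1 pr.2) ∧
      List.Pairwise (fun a b => Sep2 G k a.1 b.1) Lp := by
    intro Lp hLp
    rcases hmem' Lp hLp with h | rfl
    · exact hg Lp h
    · exact ⟨by simp, by simp⟩
  have hpw' : List.Pairwise (fun L1 L2 => ∀ pr ∈ L1, ∀ pr' ∈ L2, Disjoint pr.1 pr'.1) Ls' := by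
    rw [hLs'def, List.pairwise_append]
    refine ⟨hpw, ?_, ?_⟩
    · induction (C - Ls.length) with
      | zero => simp
      | succ c ih =>
        rw [List.replicate_succ]
        refine List.Pairwise.cons ?_ ih
        intro l' _ pr hpr
        simp at hpr
    · intro l1 _ l2 h2 pr _ pr' hpr'
      rw [List.eq_of_mem_replicate h2] at hpr'
      simp at hpr'
  have hgetmem : ∀ (a : ℕ) (h : a < C), Ls'.get ⟨a, by rw [hlen']; exact h⟩ ∈ Ls' :=
    fun a h => List.get_mem _ _
  -- the decomposition
  refine Nonempty.intro ⟨fun c => mkColl G hβge hκge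
    (Ls'.get ⟨c.1, by rw [hlen']; exact c.2⟩)
    ((hg' _ (List.get_mem _ _)).1) ((hg' _ (List.get_mem _ _)).2), ?_, ?_⟩
  · -- cover
    intro v
    obtain ⟨Lp, hLp, pr, hpr, hvpr⟩ := (hcov v).mp (Finset.mem_univ v)
    obtain ⟨t, ht⟩ := List.mem_iff_get.mp hLp
    obtain ⟨i0, hi0⟩ := List.mem_iff_get.mp hpr
    have htC : t.1 < C := lt_of_lt_of_le t.2 hlenC
    set c : Fin C := ⟨t.1, htC⟩ with hcdef
    have hgetL : Ls'.get ⟨c.1, by rw [hlen']; exact c.2⟩ = Lp := by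
      rw [← ht, List.get_eq_getElem, List.get_eq_getElem]
      simp only [hLs'def]
      exact List.getElem_append_left t.2
    have hplen : i0.1 < (Ls'.get ⟨c.1, by rw [hlen']; exact c.2⟩).length := by
      rw [hgetL]; exact i0.2
    have hmemv : ∀ (hp : i0.1 < (Ls'.get ⟨c.1, by rw [hlen']; exact c.2⟩).length),
        v ∈ ((Ls'.get ⟨c.1, by rw [hlen']; exact c.2⟩).get ⟨i0.1, hp⟩).1 := by
      intro hp
      have : (Ls'.get ⟨c.1, by rw [hlen']; exact c.2⟩).get ⟨i0.1, hp⟩ = pr := by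
        rw [← hi0]
        exact get_congr hgetL rfl
      rw [this]
      exact hvpr
    refine ⟨⟨c, ⟨i0.1, hplen⟩⟩, hmemv hplen, ?_⟩
    rintro ⟨c', i'⟩ hv'
    have hv'f : v ∈ ((Ls'.get ⟨c'.1, by rw [hlen']; exact c'.2⟩).get i').1 := hv'
    have hcc : (c' : ℕ) = (c : ℕ) := by
      by_contra hne
      have hd : Disjoint (((Ls'.get ⟨c'.1, by rw [hlen']; exact c'.2⟩).get i').1)
          ((((Ls'.get ⟨c.1, by rw [hlen']; exact c.2⟩)).get ⟨i0.1, hplen⟩).1) := by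
        rcases lt_or_gt_of_ne hne with hlt | hlt
        · exact (List.pairwise_iff_get.mp hpw' ⟨c'.1, by rw [hlen']; exact c'.2⟩
            ⟨c.1, by rw [hlen']; exact c.2⟩ hlt) _ (List.get_mem _ _) _
            (List.get_mem _ _)
        · exact Disjoint.symm ((List.pairwise_iff_get.mp hpw' ⟨c.1, by rw [hlen']; exact c.2⟩
            ⟨c'.1, by rw [hlen']; exact c'.2⟩ hlt) _ (List.get_mem _ _) _
            (List.get_mem _ _))
      exact Finset.disjoint_left.mp hd hv'f (hmemv hplen)
    have hc'c : c' = c := Fin.ext hcc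
    subst hc'c
    have hii : (i' : ℕ) = i0.1 := by
      by_contra hne
      have hpwL := (hg' _ (List.get_mem Ls' ⟨c.1, by rw [hlen']; exact c.2⟩)).2
      rcases lt_or_gt_of_ne hne with hlt | hlt
      · have := (List.pairwise_iff_get.mp hpwL i' ⟨i0.1, hplen⟩ hlt) v hv'f v
          (hmemv hplen) Walk.nil
        simp at this
      · have := (List.pairwise_iff_get.mp hpwL ⟨i0.1, hplen⟩ i' hlt) v (hmemv hplen) v
          hv'f Walk.nil
        simp at this
    exact congrArg (Sigma.mk c) (Fin.ext hii)
  · -- separation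
    intro c i j hij u hu v' hv' p
    have hpwL := (hg' _ (List.get_mem Ls' ⟨c.1, by rw [hlen']; exact c.2⟩)).2
    have hij' : (i : ℕ) ≠ (j : ℕ) := fun h => hij (Fin.ext h)
    rcases lt_or_gt_of_ne hij' with hlt | hlt
    · have := (List.pairwise_iff_get.mp hpwL i j hlt) u hu v' hv' p
      omega
    · have := (List.pairwise_iff_get.mp hpwL j i hlt) v' hv' u hu p.reverse
      rw [Walk.length_reverse] at this
      omega


theorem statement0 :
    ∃ c₁ c₂ c₃ : ℝ, 0 < c₁ ∧ 0 < c₂ ∧ 0 < c₃ ∧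
      ∀ (V : Type) [Fintype V] (G : SimpleGraph V),
        2 ≤ Fintype.card V →
        ∀ k : ℕ, 1 ≤ k →
          Nonempty (NetworkDecomposition G
            ⌈c₁ * Real.logb 2 (Fintype.card V)⌉₊
            ⌈c₂ * k * (Real.logb 2 (Fintype.card V)) ^ 3⌉₊
            ⌈c₃ * (Real.logb 2 (Fintype.card V)) ^ 2 *
              min (k : ℝ) ((Real.logb 2 (Fintype.card V)) ^ 2)⌉₊
            k) := by
  exact statement0'
end

section
/- There exist constants c₁, c₂ > 0 such that the following holds. For every finite simple graph G on n ≥ 2 vertices and every integer λ with 1 ≤ λ ≤ log₂ n, G admits a weak (λ, ⌈c₁·n^{1/λ}·(log₂ n)²⌉)-network decomposition with cluster distance 1 and congestion ⌈c₂·log₂ n⌉. -/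
open SimpleGraph

namespace NDAux
set_option linter.unusedSectionVars false
set_option maxHeartbeats 1000000

section numerics
lemma log_one_add_ge (ε : ℝ) (h0 : 0 < ε) (h1 : ε ≤ 1) : ε / 2 ≤ Real.log (1 + ε) := by
  rw [Real.le_log_iff_exp_le (by linarith)]
  have h2 := Real.add_one_le_exp (-(ε/2))
  rw [Real.exp_neg] at h2
  have h3 : 0 < Real.exp (ε/2) := Real.exp_pos _
  have h4 : Real.exp (ε/2) * (1 - ε/2) ≤ 1 := by
    have := mul_le_mul_of_nonneg_left h2 (le_of_lt h3)
    rw [mul_inv_cancel₀ (ne_of_gt h3)] at this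
    nlinarith
  nlinarith

lemma numerics (N : ℝ) (L : ℕ) (hN : 2 ≤ N) (hL : 1 ≤ L) (hLlog : (L : ℝ) ≤ Real.logb 2 N) :
    ∃ (g ε : ℝ) (Rmax : ℕ),
      0 < ε ∧ ε ≤ 1 ∧ 2 ≤ g ∧ g = N ^ ((1:ℝ)/L) ∧ ε = 1/(2*g) ∧
      ε ^ L * N < 1 ∧
      N < (1+ε) ^ (Rmax+1) ∧
      (2 * Rmax : ℝ) ≤ 9 * g * (Real.logb 2 N) ^ 2 := by
  have hlogb1 : 1 ≤ Real.logb 2 N := by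
    rw [Real.le_logb_iff_rpow_le (by norm_num) (by linarith)]
    simpa using hN
  have hlogN : 0 < Real.log N := Real.log_pos (by linarith)
  have hL0 : (0:ℝ) < L := by exact_mod_cast hL
  set g : ℝ := N ^ ((1:ℝ)/L) with hg
  have hg2 : 2 ≤ g := by
    have h1 : (2:ℝ) = N ^ ((1:ℝ)/Real.logb 2 N) := by
      rw [Real.rpow_def_of_pos (by linarith)]
      rw [← Real.log_div_log]
      have he : Real.log N * (1 / (Real.log N / Real.log 2)) = Real.log 2 := by
        field_simp
      rw [he]
      exact (Real.exp_log (by norm_num)).symm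
    rw [h1, hg]
    apply Real.rpow_le_rpow_of_exponent_le (by linarith)
    apply div_le_div_of_nonneg_left (by norm_num) hL0 hLlog
  have hgpos : 0 < g := by linarith
  set ε : ℝ := 1/(2*g) with hε
  have hεpos : 0 < ε := by positivity
  have hε1 : ε ≤ 1 := by
    rw [hε]
    rw [div_le_one (by linarith)]
    linarith
  have hgL : g ^ L = N := by
    rw [hg, ← Real.rpow_natCast (N ^ ((1:ℝ)/L)) L, ← Real.rpow_mul (by linarith)]
    rw [one_div, inv_mul_cancel₀ (ne_of_gt hL0), Real.rpow_one]
  have hsmall : ε ^ L * N < 1 := by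
    have h2g : (2*g) ^ L = 2 ^ L * g ^ L := mul_pow 2 g L
    have hεL : ε ^ L = 1 / (2 ^ L * N) := by
      rw [hε, div_pow, one_pow, h2g, hgL]
    rw [hεL]
    rw [div_mul_eq_mul_div, one_mul, div_lt_one (by positivity)]
    have h2L : (2:ℝ) ≤ 2 ^ L := by
      calc (2:ℝ) = 2 ^ 1 := (pow_one 2).symm
      _ ≤ 2 ^ L := pow_le_pow_right₀ (by norm_num) hL
    nlinarith
  have hK1 : ε / 2 ≤ Real.log (1 + ε) := log_one_add_ge ε hεpos hε1
  have hlog1ε : 0 < Real.log (1+ε) := Real.log_pos (by linarith)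
  set Rmax : ℕ := ⌈Real.log N / Real.log (1+ε)⌉₊ with hRmax
  refine ⟨g, ε, Rmax, hεpos, hε1, hg2, rfl, rfl, hsmall, ?_, ?_⟩
  · -- N < (1+ε)^(Rmax+1)
    have h1 : Real.log N / Real.log (1+ε) ≤ (Rmax : ℝ) := Nat.le_ceil _
    have h2 : Real.log N ≤ (Rmax : ℝ) * Real.log (1+ε) := by
      rw [div_le_iff₀ hlog1ε] at h1
      linarith
    have h3 : Real.log N < ((Rmax + 1 : ℕ) : ℝ) * Real.log (1+ε) := by
      push_cast
      nlinarith
    have h4 := Real.exp_lt_exp.mpr h3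
    rw [Real.exp_log (by linarith), Real.exp_nat_mul, Real.exp_log (by linarith)] at h4
    exact h4
  · -- 2 Rmax ≤ 9 g logb²
    have hceil : (Rmax : ℝ) < Real.log N / Real.log (1+ε) + 1 :=
      Nat.ceil_lt_add_one (by positivity)
    have h5 : Real.log N / Real.log (1+ε) ≤ Real.log N / (ε/2) :=
      div_le_div_of_nonneg_left (le_of_lt hlogN) (by linarith) hK1
    have h6 : Real.log N / (ε/2) = 4 * g * Real.log N := by
      rw [hε]
      field_simp
      ring
    have h7 : Real.log N ≤ Real.logb 2 N := by
      rw [← Real.log_div_log]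
      rw [le_div_iff₀ (Real.log_pos (by norm_num))]
      nlinarith [Real.log_two_lt_d9, Real.log_nonneg (show (1:ℝ) ≤ N by linarith)]
    have h8 : (Rmax : ℝ) ≤ 4 * g * Real.logb 2 N + 1 := by
      nlinarith
    nlinarith [sq_nonneg (Real.logb 2 N), sq_nonneg (Real.logb 2 N - 1)]

end numerics

variable {V : Type} [Fintype V] [DecidableEq V] (G : SimpleGraph V) [DecidableRel G.Adj]

def rball (W : Finset V) (v : V) : ℕ → Finset V
  | 0 => {v} ∩ W
  | (r+1) => rball W v r ∪ W.filter (fun u => ∃ x ∈ rball W v r, G.Adj x u)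

lemma rball_subset (W : Finset V) (v : V) : ∀ r, rball G W v r ⊆ W
  | 0 => by simp [rball]
  | (r+1) => by
    simp only [rball]
    exact Finset.union_subset (rball_subset W v r) (Finset.filter_subset _ _)

lemma rball_mono_succ (W : Finset V) (v : V) (r : ℕ) : rball G W v r ⊆ rball G W v (r+1) := by
  simp [rball]

lemma mem_rball_self {W : Finset V} {v : V} (hv : v ∈ W) (r : ℕ) : v ∈ rball G W v r := by
  induction r with
  | zero => simp [rball, hv]
  | succ r ih => exact rball_mono_succ G W v r ih

lemma rball_closure {W : Finset V} {v u x : V} {r : ℕ} (hx : x ∈ rball G W v r)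
    (hu : u ∈ W) (hadj : G.Adj x u) : u ∈ rball G W v (r+1) := by
  simp only [rball, Finset.mem_union, Finset.mem_filter]
  exact Or.inr ⟨hu, x, hx, hadj⟩

lemma rball_walk {W : Finset V} {v : V} (hv : v ∈ W) :
    ∀ (r : ℕ) (u : V), u ∈ rball G W v r →
      ∃ p : G.Walk v u, p.length ≤ r ∧ ∀ x ∈ p.support, x ∈ rball G W v r
  | 0, u, hu => by
    simp only [rball, Finset.mem_inter, Finset.mem_singleton] at hu
    obtain ⟨rfl, _⟩ := hu
    exact ⟨Walk.nil, by simp, by simp [rball, hv]⟩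
  | (r+1), u, hu => by
    rw [rball, Finset.mem_union] at hu
    rcases hu with hu | hu
    · obtain ⟨p, hp1, hp2⟩ := rball_walk hv r u hu
      exact ⟨p, le_trans hp1 (Nat.le_succ r), fun x hx => rball_mono_succ G W v r (hp2 x hx)⟩
    · rw [Finset.mem_filter] at hu
      obtain ⟨huW, x, hx, hadj⟩ := hu
      obtain ⟨p, hp1, hp2⟩ := rball_walk hv r x hx
      refine ⟨p.concat hadj, ?_, ?_⟩
      · rw [Walk.length_concat]; omega
      · intro y hy
        rw [Walk.support_concat, List.mem_append] at hy
        rcases hy with hy | hy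
        · exact rball_mono_succ G W v r (hp2 y hy)
        · simp only [List.mem_singleton] at hy
          subst hy
          exact rball_closure G hx huW hadj

/-- A "good ball" of radius `Rmax`: a set with a center reaching every vertex
by a walk of length `≤ Rmax` staying inside the set. -/
def Good (Rmax : ℕ) (S : Finset V) : Prop :=
  ∃ v ∈ S, ∀ u ∈ S, ∃ p : G.Walk v u, p.length ≤ Rmax ∧ ∀ x ∈ p.support, (x : V) ∈ S


lemma rball_card_zero {W : Finset V} {v : V} (hv : v ∈ W) : (rball G W v 0).card = 1 := by
  simp [rball, Finset.singleton_inter_of_mem hv]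

lemma grow (ε : ℝ) (hε : 0 < ε) (Rmax : ℕ)
    (hbig : (Fintype.card V : ℝ) < (1+ε) ^ (Rmax+1)) (W : Finset V) (v : V) (hv : v ∈ W) :
    ∃ r ≤ Rmax, ((rball G W v (r+1)).card : ℝ) < (1+ε) * ((rball G W v r).card : ℝ) := by
  by_contra hcon
  push_neg at hcon
  have key : ∀ s, s ≤ Rmax + 1 → (1+ε) ^ s ≤ ((rball G W v s).card : ℝ) := by
    intro s
    induction s with
    | zero => intro _; simp [rball_card_zero G hv]
    | succ s ih =>
      intro hs
      have h1 : (1+ε) ^ s ≤ ((rball G W v s).card : ℝ) := ih (by omega)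
      calc (1+ε) ^ (s+1) = (1+ε) * (1+ε) ^ s := by ring
      _ ≤ (1+ε) * ((rball G W v s).card : ℝ) := by
          apply mul_le_mul_of_nonneg_left h1 (by linarith)
      _ ≤ ((rball G W v (s+1)).card : ℝ) := hcon s (by omega)
  have h2 := key (Rmax+1) le_rfl
  have h3 : ((rball G W v (Rmax+1)).card : ℝ) ≤ (Fintype.card V : ℝ) := by
    exact_mod_cast Nat.cast_le.mpr (Finset.card_le_card (Finset.subset_univ _)) |>.trans
      (by simp [Finset.card_univ])
  linarith

lemma phase (ε : ℝ) (hε : 0 < ε) (Rmax : ℕ)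
    (hgrow : ∀ (W : Finset V) (v : V), v ∈ W →
      ∃ r ≤ Rmax, ((rball G W v (r+1)).card : ℝ) < (1+ε) * ((rball G W v r).card : ℝ)) :
    ∀ (n : ℕ) (W : Finset V), W.card ≤ n →
    ∃ (bs : List (Finset V)) (D : Finset V),
      (∀ S ∈ bs, Good G Rmax S) ∧
      (∀ x ∈ W, x ∈ D ∨ ∃ S ∈ bs, x ∈ S) ∧
      (∀ S ∈ bs, S ⊆ W) ∧ D ⊆ W ∧
      (∀ S ∈ bs, Disjoint S D) ∧
      bs.Pairwise (fun S T => Disjoint S T ∧ ∀ x ∈ S, ∀ y ∈ T, ¬ G.Adj x y) ∧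
      ((D.card : ℝ) ≤ ε * (W.card : ℝ)) := by
  intro n
  induction n with
  | zero =>
    intro W hW
    have : W = ∅ := Finset.card_eq_zero.mp (Nat.le_zero.mp hW)
    subst this
    exact ⟨[], ∅, by simp, by simp, by simp, by simp, by simp, by simp, by simp⟩
  | succ n ih =>
    intro W hW
    rcases Finset.eq_empty_or_nonempty W with rfl | ⟨v, hv⟩
    · exact ⟨[], ∅, by simp, by simp, by simp, by simp, by simp, by simp, by simp⟩
    obtain ⟨r, hr, hlt⟩ := hgrow W v hv
    set B := rball G W v r with hB
    set Bp := rball G W v (r+1) with hBp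
    have hBBp : B ⊆ Bp := rball_mono_succ G W v r
    have hBpW : Bp ⊆ W := rball_subset G W v (r+1)
    have hBW : B ⊆ W := rball_subset G W v r
    set Sh := Bp \ B with hSh
    set W' := W \ Bp with hW'
    have hW'card : W'.card ≤ n := by
      have hvB : v ∈ Bp := mem_rball_self G hv (r+1)
      have : W'.card < W.card := Finset.card_lt_card (by
        constructor
        · exact Finset.sdiff_subset
        · intro hsub
          exact absurd (hsub hv) (by simp [hW', hvB]))
      omega
    obtain ⟨bs', D', h1, h2, h3, h4, h5, h6, h7⟩ := ih W' hW'card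
    refine ⟨B :: bs', Sh ∪ D', ?_, ?_, ?_, ?_, ?_, ?_, ?_⟩
    · intro S hS
      rcases List.mem_cons.mp hS with rfl | hS
      · refine ⟨v, mem_rball_self G hv r, ?_⟩
        intro u hu
        obtain ⟨p, hp1, hp2⟩ := rball_walk G hv r u hu
        exact ⟨p, hp1.trans hr, hp2⟩
      · exact h1 S hS
    · intro x hx
      by_cases hxBp : x ∈ Bp
      · by_cases hxB : x ∈ B
        · exact Or.inr ⟨B, by simp, hxB⟩
        · exact Or.inl (by simp [hSh, hxBp, hxB])
      · have hxW' : x ∈ W' := by simp [hW', hx, hxBp]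
        rcases h2 x hxW' with hD | ⟨S, hS, hxS⟩
        · exact Or.inl (by simp [hD])
        · exact Or.inr ⟨S, by simp [hS], hxS⟩
    · intro S hS
      rcases List.mem_cons.mp hS with rfl | hS
      · exact hBW
      · exact (h3 S hS).trans (Finset.sdiff_subset)
    · exact Finset.union_subset (hSh ▸ (Finset.sdiff_subset.trans hBpW)) (h4.trans Finset.sdiff_subset)
    · intro S hS
      rcases List.mem_cons.mp hS with rfl | hS
      · refine Finset.disjoint_union_right.mpr ⟨?_, ?_⟩
        · exact Finset.disjoint_sdiff
        · exact Finset.disjoint_left.mpr (fun x hxS hxD => by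
            have := h4 hxD
            simp only [hW', Finset.mem_sdiff] at this
            exact this.2 (hBBp hxS))
      · refine Finset.disjoint_union_right.mpr ⟨?_, h5 S hS⟩
        exact Finset.disjoint_left.mpr (fun x hxS hxSh => by
          have hxW' := h3 S hS hxS
          simp only [hW', Finset.mem_sdiff] at hxW'
          simp only [hSh, Finset.mem_sdiff] at hxSh
          exact hxW'.2 hxSh.1)
    · rw [List.pairwise_cons]
      refine ⟨?_, h6⟩
      intro T hT
      have hTW' : T ⊆ W' := h3 T hT
      constructor
      · exact Finset.disjoint_left.mpr (fun x hxB hxT => by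
          have := hTW' hxT
          simp only [hW', Finset.mem_sdiff] at this
          exact this.2 (hBBp hxB))
      · intro x hx y hy hadj
        have hyW' := hTW' hy
        simp only [hW', Finset.mem_sdiff] at hyW'
        exact hyW'.2 (rball_closure G hx hyW'.1 hadj)
    · have hcard1 : ((Sh).card : ℝ) ≤ ε * (B.card : ℝ) := by
        have : (Sh.card : ℕ) = Bp.card - B.card := Finset.card_sdiff_of_subset hBBp
        have hle : (B.card : ℝ) ≤ (Bp.card : ℝ) := by exact_mod_cast Finset.card_le_card hBBp
        have : (Sh.card : ℝ) = (Bp.card : ℝ) - (B.card : ℝ) := by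
          rw [this]
          push_cast [Finset.card_le_card hBBp]
          ring
        nlinarith
      have hcard2 : (B.card : ℝ) + (W'.card : ℝ) ≤ (W.card : ℝ) := by
        have hdisj : Disjoint B W' := Finset.disjoint_left.mpr (fun x hxB hxW' => by
          simp only [hW', Finset.mem_sdiff] at hxW'
          exact hxW'.2 (hBBp hxB))
        have := Finset.card_le_card (Finset.union_subset hBW (Finset.sdiff_subset (s := W) (t := Bp)) : B ∪ W' ⊆ W)
        rw [Finset.card_union_of_disjoint hdisj] at this
        exact_mod_cast this
      have : ((Sh ∪ D').card : ℝ) ≤ (Sh.card : ℝ) + (D'.card : ℝ) := by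
        exact_mod_cast Finset.card_union_le Sh D'
      have hW'c : (D'.card : ℝ) ≤ ε * (W'.card : ℝ) := h7
      nlinarith
def Rel (a b : Finset V × ℕ) : Prop :=
  Disjoint a.1 b.1 ∧ (a.2 = b.2 → ∀ x ∈ a.1, ∀ y ∈ b.1, ¬ G.Adj x y)

lemma Rel_symm : Symmetric (Rel G) := by
  intro a b ⟨h1, h2⟩
  exact ⟨h1.symm, fun he x hx y hy hadj => h2 he.symm y hy x hx hadj.symm⟩


lemma outer (ε : ℝ) (hε : 0 < ε) (Rmax : ℕ) (L : ℕ)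
    (hphase : ∀ W : Finset V,
      ∃ (bs : List (Finset V)) (D : Finset V),
        (∀ S ∈ bs, Good G Rmax S) ∧
        (∀ x ∈ W, x ∈ D ∨ ∃ S ∈ bs, x ∈ S) ∧
        (∀ S ∈ bs, S ⊆ W) ∧ D ⊆ W ∧
        (∀ S ∈ bs, Disjoint S D) ∧
        bs.Pairwise (fun S T => Disjoint S T ∧ ∀ x ∈ S, ∀ y ∈ T, ¬ G.Adj x y) ∧
        ((D.card : ℝ) ≤ ε * (W.card : ℝ))) :
    ∀ c : ℕ, c ≤ L → ∀ U : Finset V,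
      (U.card : ℝ) ≤ ε ^ (L - c) * (Fintype.card V : ℝ) →
      ε ^ L * (Fintype.card V : ℝ) < 1 →
      ∃ l : List (Finset V × ℕ),
        (∀ q ∈ l, Good G Rmax q.1 ∧ q.1 ⊆ U ∧ q.2 < c) ∧
        (∀ x ∈ U, ∃ q ∈ l, x ∈ q.1) ∧
        l.Pairwise (Rel G) := by
  intro c
  induction c with
  | zero =>
    intro _ U hU hsmall
    have : (U.card : ℝ) < 1 := by
      have : ε ^ (L - 0) * (Fintype.card V : ℝ) < 1 := by simpa using hsmall
      linarith
    have hU0 : U = ∅ := by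
      have h0 : U.card = 0 := by exact_mod_cast Nat.lt_one_iff.mp (by exact_mod_cast this)
      exact Finset.card_eq_zero.mp h0
    subst hU0
    exact ⟨[], by simp, by simp, by simp⟩
  | succ c ih =>
    intro hc U hU hsmall
    obtain ⟨bs, D, h1, h2, h3, h4, h5, h6, h7⟩ := hphase U
    have hD : (D.card : ℝ) ≤ ε ^ (L - c) * (Fintype.card V : ℝ) := by
      have h8 : (U.card : ℝ) ≤ ε ^ (L - (c+1)) * (Fintype.card V : ℝ) := hU
      have hpow : ε ^ (L - c) = ε * ε ^ (L - (c+1)) := by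
        have : L - c = (L - (c+1)) + 1 := by omega
        rw [this, pow_succ]
        ring
      calc (D.card : ℝ) ≤ ε * (U.card : ℝ) := h7
        _ ≤ ε * (ε ^ (L - (c+1)) * (Fintype.card V : ℝ)) :=
            mul_le_mul_of_nonneg_left h8 (le_of_lt hε)
        _ = ε ^ (L - c) * (Fintype.card V : ℝ) := by rw [hpow]; ring
    obtain ⟨l', hl1, hl2, hl3⟩ := ih (by omega) D hD hsmall
    refine ⟨bs.map (fun S => (S, c)) ++ l', ?_, ?_, ?_⟩
    · intro q hq
      rcases List.mem_append.mp hq with hq | hq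
      · obtain ⟨S, hS, rfl⟩ := List.mem_map.mp hq
        exact ⟨h1 S hS, h3 S hS, by omega⟩
      · obtain ⟨hg, hsub, hcol⟩ := hl1 q hq
        exact ⟨hg, hsub.trans h4, by omega⟩
    · intro x hx
      rcases h2 x hx with hD' | ⟨S, hS, hxS⟩
      · obtain ⟨q, hq, hxq⟩ := hl2 x hD'
        exact ⟨q, List.mem_append.mpr (Or.inr hq), hxq⟩
      · exact ⟨(S, c), List.mem_append.mpr (Or.inl (List.mem_map.mpr ⟨S, hS, rfl⟩)), hxS⟩
    · rw [List.pairwise_append]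
      refine ⟨?_, hl3, ?_⟩
      · rw [List.pairwise_map]
        refine h6.imp ?_
        intro S T ⟨hd, hna⟩
        exact ⟨hd, fun _ => hna⟩
      · intro a ha b hb
        obtain ⟨S, hS, rfl⟩ := List.mem_map.mp ha
        obtain ⟨hg, hsub, hcol⟩ := hl1 b hb
        constructor
        · exact Finset.disjoint_left.mpr (fun x hxS hxb =>
            Finset.disjoint_left.mp (h5 S hS) hxS (hsub hxb))
        · intro he
          exact absurd he.symm (by simp; omega)
lemma walk_in_induce {S : Set V} {u v : V} (p : G.Walk u v) :
    ∀ (hu : u ∈ S) (hv : v ∈ S), (∀ x ∈ p.support, x ∈ S) →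
    ∃ q : ((⊤ : G.Subgraph).induce S).coe.Walk ⟨u, hu⟩ ⟨v, hv⟩, q.length = p.length := by
  induction p with
  | nil => intro hu hv _; exact ⟨Walk.nil, rfl⟩
  | @cons u b v h p ih =>
    intro hu hv hp
    have hb : b ∈ S := hp b (by simp [Walk.support_cons])
    obtain ⟨q, hq⟩ := ih hb hv (fun x hx => hp x (by simp [Walk.support_cons]; right; exact hx))
    have hadj : ((⊤ : G.Subgraph).induce S).coe.Adj ⟨u, hu⟩ ⟨b, hb⟩ := by
      rw [Subgraph.coe_adj]
      simp [Subgraph.induce_adj, hu, hb, h]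
    exact ⟨Walk.cons hadj q, by simp [Walk.length_cons, hq]⟩

lemma far_apart_of_nonadj {A B : Set V} (hdisj : Disjoint A B)
    (hna : ∀ x ∈ A, ∀ y ∈ B, ¬ G.Adj x y) : FarApart G 1 A B := by
  intro u hu v hv p
  cases p with
  | nil => exact absurd (Set.disjoint_left.mp hdisj hu) (by simp [hv])
  | @cons _ b _ h q =>
    cases q with
    | nil => exact absurd h (hna u hu v hv)
    | cons h' q' => simp [Walk.length_cons]

lemma assemble (L Rmax β κ : ℕ) (h2R : 2 * Rmax ≤ β) (hκ : 1 ≤ κ) (hL : 1 ≤ L)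
    (l : List (Finset V × ℕ))
    (hq : ∀ q ∈ l, Good G Rmax q.1 ∧ q.2 < L)
    (hcov : ∀ x : V, ∃ q ∈ l, x ∈ q.1)
    (hpw : l.Pairwise (Rel G)) :
    Nonempty (NetworkDecomposition G L β κ 1) := by
  -- the per-color filtered lists
  set lc : Fin L → List (Finset V × ℕ) := fun c => l.filter (fun q => q.2 = (c : ℕ)) with hlc
  have hmemlc : ∀ (c : Fin L) (q : Finset V × ℕ), q ∈ lc c ↔ q ∈ l ∧ q.2 = (c : ℕ) := by
    intro c q
    simp [hlc, List.mem_filter]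
  -- pairwise relation on filtered lists by index
  have hR : ∀ (c : Fin L) (i j : Fin (lc c).length), i ≠ j →
      Rel G ((lc c).get i) ((lc c).get j) := by
    intro c i j hij
    have hpwc : (lc c).Pairwise (Rel G) := List.Pairwise.filter _ hpw
    rcases lt_or_gt_of_ne hij with h | h
    · exact List.pairwise_iff_get.mp hpwc i j h
    · exact Rel_symm G (List.pairwise_iff_get.mp hpwc j i h)
  -- clusters are nonempty
  have hne : ∀ q ∈ l, q.1.Nonempty := by
    intro q hql
    obtain ⟨⟨v, hv, _⟩, _⟩ := hq q hql
    exact ⟨v, hv⟩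
  -- build the cluster collections
  refine ⟨⟨fun c => ?_, ?_, ?_⟩⟩
  · refine
      { p := (lc c).length
        cluster := fun i => (((lc c).get i).1 : Set V)
        tree := fun i => (⊤ : G.Subgraph).induce (((lc c).get i).1 : Set V)
        disjoint := ?_
        subset_tree := ?_
        connected := ?_
        radius := ?_
        congestion := ?_ }
    · intro i j hij
      exact Finset.disjoint_coe.mpr (hR c i j hij).1
    · intro i
      simp [Subgraph.induce_verts]
    · intro i
      intro u v
      obtain ⟨hgood, _⟩ := hq ((lc c).get i) ((hmemlc c _).mp (List.mem_iff_get.mpr ⟨i, rfl⟩) |>.1)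
      obtain ⟨z, hz, hwalk⟩ := hgood
      have hu' : (u : V) ∈ (((lc c).get i).1 : Set V) := u.2
      have hv' : (v : V) ∈ (((lc c).get i).1 : Set V) := v.2
      obtain ⟨p1, _, hp1s⟩ := hwalk u (by exact_mod_cast hu')
      obtain ⟨p2, _, hp2s⟩ := hwalk v (by exact_mod_cast hv')
      obtain ⟨q1, _⟩ := walk_in_induce G p1 (by exact_mod_cast hz) hu' (fun x hx => by exact_mod_cast hp1s x hx)
      obtain ⟨q2, _⟩ := walk_in_induce G p2 (by exact_mod_cast hz) hv' (fun x hx => by exact_mod_cast hp2s x hx)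
      exact (q1.reverse.append q2).reachable
    · intro i u v
      obtain ⟨hgood, _⟩ := hq ((lc c).get i) ((hmemlc c _).mp (List.mem_iff_get.mpr ⟨i, rfl⟩) |>.1)
      obtain ⟨z, hz, hwalk⟩ := hgood
      have hu' : (u : V) ∈ (((lc c).get i).1 : Set V) := u.2
      have hv' : (v : V) ∈ (((lc c).get i).1 : Set V) := v.2
      obtain ⟨p1, hl1, hp1s⟩ := hwalk u (by exact_mod_cast hu')
      obtain ⟨p2, hl2, hp2s⟩ := hwalk v (by exact_mod_cast hv')
      obtain ⟨q1, hq1⟩ := walk_in_induce G p1 (by exact_mod_cast hz) hu' (fun x hx => by exact_mod_cast hp1s x hx)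
      obtain ⟨q2, hq2⟩ := walk_in_induce G p2 (by exact_mod_cast hz) hv' (fun x hx => by exact_mod_cast hp2s x hx)
      refine ⟨q1.reverse.append q2, ?_⟩
      rw [Walk.length_append, Walk.length_reverse, hq1, hq2]
      omega
    · intro e he
      induction e with
      | h a b =>
        by_cases hex : ∃ i : Fin (lc c).length, s(a,b) ∈ ((⊤ : G.Subgraph).induce ((((lc c).get i).1 : Finset V) : Set V)).edgeSet
        · obtain ⟨i0, hi0⟩ := hex
          have hsub : {i : Fin (lc c).length |
              s(a,b) ∈ ((⊤ : G.Subgraph).induce ((((lc c).get i).1 : Finset V) : Set V)).edgeSet} ⊆ {i0} := by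
            intro j hj
            simp only [Set.mem_setOf_eq, Subgraph.mem_edgeSet, Subgraph.induce_adj] at hj hi0
            by_contra hji
            have hne' : j ≠ i0 := by simpa using hji
            have ha1 : a ∈ ((lc c).get j).1 := by exact_mod_cast hj.1
            have ha2 : a ∈ ((lc c).get i0).1 := by exact_mod_cast hi0.1
            exact (Finset.disjoint_left.mp (hR c j i0 hne').1 ha1) ha2
          calc _ ≤ ({i0} : Set (Fin (lc c).length)).ncard := Set.ncard_le_ncard hsub (Set.finite_singleton i0)
            _ = 1 := Set.ncard_singleton i0
            _ ≤ κ := hκ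
        · have : {i : Fin (lc c).length |
              s(a,b) ∈ ((⊤ : G.Subgraph).induce ((((lc c).get i).1 : Finset V) : Set V)).edgeSet} = ∅ := by
            rw [Set.eq_empty_iff_forall_notMem]
            intro i hi
            exact hex ⟨i, hi⟩
          rw [this]
          simp
  · -- cover
    intro x
    obtain ⟨q, hql, hxq⟩ := hcov x
    have hcolq : q.2 < L := (hq q hql).2
    set c : Fin L := ⟨q.2, hcolq⟩ with hc
    have hqlc : q ∈ lc c := (hmemlc c q).mpr ⟨hql, rfl⟩
    obtain ⟨i, hi⟩ := List.get_of_mem hqlc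
    refine ⟨⟨c, i⟩, ?_, ?_⟩
    · show x ∈ (((lc c).get i).1 : Set V)
      rw [hi]
      exact_mod_cast hxq
    · rintro ⟨c', i'⟩ hx'
      have hmem' : (lc c').get i' ∈ l ∧ ((lc c').get i').2 = (c' : ℕ) :=
        (hmemlc c' _).mp (List.mem_iff_get.mpr ⟨i', rfl⟩)
      have hx'' : x ∈ ((lc c').get i').1 := by exact_mod_cast hx'
      have heq : (lc c').get i' = q := by
        by_contra hne'
        have hrel := (haveI : Std.Symm (Rel G) := ⟨fun a b h => Rel_symm G h⟩; List.Pairwise.forall hpw) hmem'.1 hql hne'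
        exact (Finset.disjoint_left.mp hrel.1 hx'') hxq
      have hcc : c' = c := by
        apply Fin.ext
        have h2 : ((lc c').get i').2 = q.2 := by rw [heq]
        rw [hmem'.2] at h2
        exact h2
      subst hcc
      have hii : i' = i := by
        by_contra hne'
        have hrel := hR c i' i hne'
        rw [hi] at hrel
        exact (Finset.disjoint_left.mp hrel.1 hx'') hxq
      subst hii
      rfl
  · -- sep
    intro c i j hij
    have h := hR c i j hij
    have hci : ((lc c).get i).2 = (c : ℕ) := ((hmemlc c _).mp (List.mem_iff_get.mpr ⟨i, rfl⟩)).2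
    have hcj : ((lc c).get j).2 = (c : ℕ) := ((hmemlc c _).mp (List.mem_iff_get.mpr ⟨j, rfl⟩)).2
    exact far_apart_of_nonadj G (Finset.disjoint_coe.mpr h.1)
      (fun x hx y hy => h.2 (by rw [hci, hcj]) x (by exact_mod_cast hx) y (by exact_mod_cast hy))
end NDAux

set_option maxHeartbeats 1000000 in
theorem statement1 :
    ∃ c₁ c₂ : ℝ, 0 < c₁ ∧ 0 < c₂ ∧
      ∀ (V : Type) [Fintype V] (G : SimpleGraph V),
        2 ≤ Fintype.card V →
        ∀ L : ℕ, 1 ≤ L → (L : ℝ) ≤ Real.logb 2 (Fintype.card V) →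
          Nonempty (NetworkDecomposition G L
            ⌈c₁ * (Fintype.card V : ℝ) ^ ((1 : ℝ) / L) *
              (Real.logb 2 (Fintype.card V)) ^ 2⌉₊
            ⌈c₂ * Real.logb 2 (Fintype.card V)⌉₊
            1) := by
  refine ⟨9, 1, by norm_num, by norm_num, ?_⟩
  intro V _ G hcard L hL hLlog
  classical
  set N : ℝ := (Fintype.card V : ℝ) with hN
  have hN2 : (2:ℝ) ≤ N := by rw [hN]; exact_mod_cast hcard
  obtain ⟨g, ε, Rmax, hεpos, hε1, hg2, hgdef, hεdef, hsmall, hbig, h2R⟩ :=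
    NDAux.numerics N L hN2 hL hLlog
  have hgrow : ∀ (W : Finset V) (v : V), v ∈ W →
      ∃ r ≤ Rmax, ((NDAux.rball G W v (r+1)).card : ℝ) < (1+ε) * ((NDAux.rball G W v r).card : ℝ) :=
    fun W v hv => NDAux.grow G ε hεpos Rmax (by exact_mod_cast hbig) W v hv
  have hphase := NDAux.phase G ε hεpos Rmax hgrow
  obtain ⟨l, hl1, hl2, hl3⟩ := NDAux.outer G ε hεpos Rmax L
    (fun W => hphase W.card W le_rfl) L le_rfl Finset.univ
    (by simp [Finset.card_univ, pow_zero]) hsmall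
  have hlogb1 : 1 ≤ Real.logb 2 N := by
    rw [Real.le_logb_iff_rpow_le (by norm_num) (by linarith)]
    simpa using hN2
  have hβ : 2 * Rmax ≤ ⌈(9:ℝ) * N ^ ((1:ℝ)/L) * (Real.logb 2 N)^2⌉₊ := by
    have h1 : (2*Rmax : ℝ) ≤ 9 * N ^ ((1:ℝ)/L) * (Real.logb 2 N)^2 := by
      rw [← hgdef]
      linarith
    have h2 := Nat.le_ceil ((9:ℝ) * N ^ ((1:ℝ)/L) * (Real.logb 2 N)^2)
    exact_mod_cast h1.trans h2
  have hκ : 1 ≤ ⌈(1:ℝ) * Real.logb 2 N⌉₊ := by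
    have : 0 < ⌈(1:ℝ) * Real.logb 2 N⌉₊ := Nat.ceil_pos.mpr (by linarith)
    omega
  exact NDAux.assemble G L Rmax _ _ hβ hκ hL l
    (fun q hq => ⟨(hl1 q hq).1, (hl1 q hq).2.2⟩)
    (fun x => hl2 x (Finset.mem_univ x)) hl3
end

section
/- There exist constants c₁, c₂ > 0 such that the following holds. For every n ≥ 2, every finite simple graph G on at most n vertices, every subset S of the vertices of G, every integer k ≥ 1, and every real x ≥ 1, there exists a cluster collection C₁,…,C_p in G with every C_i ⊆ S, with Steiner radius ⌈c₁·k·x·(log₂ n)³⌉ and congestion ⌈c₂·(log₂ n)·min{k, x·(log₂ n)²}⌉, such that |C₁ ∪ … ∪ C_p| ≥ (1 − 1/x)·|S| and dist_G(C_i, C_j) > k for all 1 ≤ i ≠ j ≤ p. -/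
open SimpleGraph

set_option linter.unusedSectionVars false
set_option maxHeartbeats 1000000
open scoped Classical

namespace Statement3Aux

variable {V : Type} [Fintype V] [DecidableEq V] (G : SimpleGraph V)

lemma dist_tri {u v w : V} (h1 : G.Reachable u v) (h2 : G.Reachable v w) :
    G.dist u w ≤ G.dist u v + G.dist v w := by
  obtain ⟨p, hp⟩ := h1.exists_walk_length_eq_dist
  obtain ⟨q, hq⟩ := h2.exists_walk_length_eq_dist
  calc G.dist u w ≤ (p.append q).length := dist_le _
    _ = _ := by rw [Walk.length_append, hp, hq]

noncomputable def rk (v : V) : ℕ := (Fintype.equivFin V v : ℕ)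
lemma rk_lt (v : V) : rk v < Fintype.card V := (Fintype.equivFin V v).isLt
lemma rk_inj {a b : V} (h : rk a = rk b) : a = b :=
  (Fintype.equivFin V).injective (Fin.val_injective h)

noncomputable def Ar (v : V) : Finset V := (Set.toFinite {u | G.Reachable u v}).toFinset
lemma mem_Ar {u v : V} : u ∈ Ar G v ↔ G.Reachable u v := Set.Finite.mem_toFinset _
lemma self_mem_Ar (v : V) : v ∈ Ar G v := (mem_Ar G).2 (Reachable.refl v)
lemma Ar_eq_of_reachable {v w : V} (h : G.Reachable v w) : Ar G v = Ar G w := by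
  ext u
  simp only [mem_Ar]
  exact ⟨fun h' => h'.trans h, fun h' => h'.trans h.symm⟩

variable (δ : V → ℕ)

noncomputable def fval (v u : V) : ℤ := (δ u : ℤ) - (G.dist u v : ℤ)
noncomputable def key (v u : V) : ℤ := (Fintype.card V + 1) * fval G δ v u + rk u

lemma key_lt_of_fval_lt {v u u' : V} (h : fval G δ v u < fval G δ v u') :
    key G δ v u < key G δ v u' := by
  have h1 := rk_lt (V := V) u
  have h2 := rk_lt (V := V) u'
  unfold key
  have : fval G δ v u + 1 ≤ fval G δ v u' := h
  nlinarith [Int.ofNat_nonneg (rk (V := V) u), Int.ofNat_nonneg (rk (V := V) u'),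
    (Int.ofNat_lt.2 h1 : (rk u : ℤ) < (Fintype.card V : ℤ)),
    (Int.ofNat_lt.2 h2 : (rk u' : ℤ) < (Fintype.card V : ℤ))]

lemma fval_le_of_key_le {v u u' : V} (h : key G δ v u ≤ key G δ v u') :
    fval G δ v u ≤ fval G δ v u' := by
  by_contra hc
  exact absurd (key_lt_of_fval_lt G δ (lt_of_not_ge hc)) (not_lt.2 h)

lemma key_eq_iff {v u u' : V} (h : key G δ v u = key G δ v u') : u = u' := by
  have hf : fval G δ v u = fval G δ v u' :=
    le_antisymm (fval_le_of_key_le G δ h.le) (fval_le_of_key_le G δ h.ge)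
  have : (rk u : ℤ) = rk u' := by
    unfold key at h; rw [hf] at h; linarith
  exact rk_inj (by exact_mod_cast this)

lemma exists_center (v : V) :
    ∃ c ∈ Ar G v, ∀ u ∈ Ar G v, key G δ v u ≤ key G δ v c := by
  obtain ⟨c, hc, h⟩ := Finset.exists_max_image (Ar G v) (key G δ v) ⟨v, self_mem_Ar G v⟩
  exact ⟨c, hc, h⟩

noncomputable def center (v : V) : V := (exists_center G δ v).choose
lemma center_mem (v : V) : center G δ v ∈ Ar G v := (exists_center G δ v).choose_spec.1
lemma key_le_center (v : V) : ∀ u ∈ Ar G v, key G δ v u ≤ key G δ v (center G δ v) :=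
  (exists_center G δ v).choose_spec.2
lemma center_eq_of_max {v c : V} (hc : c ∈ Ar G v)
    (h : ∀ u ∈ Ar G v, key G δ v u ≤ key G δ v c) : center G δ v = c :=
  key_eq_iff G δ (le_antisymm (h _ (center_mem G δ v)) (key_le_center G δ v c hc))
lemma center_reachable (v : V) : G.Reachable (center G δ v) v :=
  (mem_Ar G).1 (center_mem G δ v)

lemma dist_center_le (v : V) : G.dist (center G δ v) v ≤ δ (center G δ v) := by
  have h := fval_le_of_key_le G δ (key_le_center G δ v v (self_mem_Ar G v))
  unfold fval at h
  simp only [SimpleGraph.dist_self] at h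
  have : (G.dist (center G δ v) v : ℤ) ≤ (δ (center G δ v) : ℤ) := by
    have := Int.ofNat_nonneg (δ v); omega
  exact_mod_cast this

/-- key geodesic lemma : a vertex on a geodesic from the center inherits the center. -/
lemma center_eq_on_geodesic {v w c : V} (hc : center G δ v = c)
    (hw : G.Reachable w v) (hd : G.dist c w + G.dist w v = G.dist c v) :
    center G δ w = c := by
  have hcv : G.Reachable c v := hc ▸ center_reachable G δ v
  have hAr : Ar G w = Ar G v := Ar_eq_of_reachable G hw
  apply center_eq_of_max
  · rw [hAr] at *
    exact (mem_Ar G).2 hcv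
  · intro u hu
    rw [hAr] at hu
    have hur : G.Reachable u w := (mem_Ar G).1 (hAr ▸ hu)
    -- triangle : dist u v ≤ dist u w + dist w v
    have htri : (G.dist u v : ℤ) ≤ (G.dist u w : ℤ) + (G.dist w v : ℤ) := by
      exact_mod_cast dist_tri G hur hw
    have hkey := key_le_center G δ v u hu
    rw [hc] at hkey
    unfold key fval at *
    have hdz : (G.dist c w : ℤ) + (G.dist w v : ℤ) = (G.dist c v : ℤ) := by exact_mod_cast hd
    have hN : (0:ℤ) ≤ (Fintype.card V : ℤ) + 1 := by positivity
    nlinarith [hN]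

variable (k : ℕ)

def Dom (v u : V) : Prop :=
  u ∈ Ar G v ∧ ∀ u' ∈ Ar G v, u' ≠ u → fval G δ v u' + 2 * (k : ℤ) < fval G δ v u

def Padded (v : V) : Prop := ∃ u, Dom G δ k v u

lemma Dom.center_eq {v u : V} (h : Dom G δ k v u) : center G δ v = u := by
  apply center_eq_of_max G δ h.1
  intro u' hu'
  by_cases he : u' = u
  · subst he; exact le_refl _
  · have := h.2 u' hu' he
    have hf : fval G δ v u' < fval G δ v u := by
      have : (0:ℤ) ≤ 2 * (k:ℤ) := by positivity
      omega
    exact (key_lt_of_fval_lt G δ hf).le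

/-- every vertex within distance k of a padded vertex has the same center. -/
lemma center_eq_of_padded_close {v w : V} (hp : Padded G δ k v)
    (hr : G.Reachable v w) (hdk : G.dist v w ≤ k) :
    center G δ w = center G δ v := by
  obtain ⟨u, hu⟩ := hp
  rw [hu.center_eq]
  have hAr : Ar G w = Ar G v := Ar_eq_of_reachable G hr.symm
  have huw : G.Reachable u w := ((mem_Ar G).1 hu.1).trans hr
  apply center_eq_of_max
  · rw [hAr]; exact hu.1
  · intro u' hu'
    rw [hAr] at hu'
    by_cases he : u' = u
    · subst he; exact le_refl _
    · apply (key_lt_of_fval_lt G δ _).le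
      have h1 := hu.2 u' hu' he
      have hu'r : G.Reachable u' v := (mem_Ar G).1 hu'
      have t1 : (G.dist u' v : ℤ) ≤ (G.dist u' w : ℤ) + (G.dist w v : ℤ) :=
        by exact_mod_cast dist_tri G (hu'r.trans hr) hr.symm
      have t2 : (G.dist u w : ℤ) ≤ (G.dist u v : ℤ) + (G.dist v w : ℤ) :=
        by exact_mod_cast dist_tri G ((mem_Ar G).1 hu.1) hr
      have hcomm : G.dist w v = G.dist v w := SimpleGraph.dist_comm ..
      have hk : (G.dist v w : ℤ) ≤ (k : ℤ) := by exact_mod_cast hdk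
      unfold fval at *
      rw [hcomm] at t1
      omega

def treeSub (u : V) : G.Subgraph where
  verts := {w | center G δ w = u}
  Adj a b := G.Adj a b ∧ center G δ a = u ∧ center G δ b = u
  adj_sub h := h.1
  edge_vert h := h.2.1
  symm := ⟨fun a b h => ⟨h.1.symm, h.2.2, h.2.1⟩⟩

lemma lift_walk {u a b : V} (p : G.Walk a b) (hp : ∀ w ∈ p.support, center G δ w = u) :
    ∃ q : ((treeSub G δ u).coe).Walk
        ⟨a, hp a p.start_mem_support⟩ ⟨b, hp b p.end_mem_support⟩,
      q.length = p.length := by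
  induction p with
  | nil => exact ⟨Walk.nil, rfl⟩
  | @cons a c b h p ih =>
    obtain ⟨q, hq⟩ := ih (fun w hw => hp w (by simp [Walk.support_cons, hw]))
    refine ⟨Walk.cons ⟨h, hp a (Walk.start_mem_support _), hp c (by simp [Walk.support_cons])⟩ q, ?_⟩
    exact congrArg (· + 1) hq

lemma exists_walk_to_center {u w : V} (hw : center G δ w = u) (hu : center G δ u = u) :
    ∃ q : ((treeSub G δ u).coe).Walk ⟨w, hw⟩ ⟨u, hu⟩, q.length ≤ δ u := by
  have hr : G.Reachable w u := (hw ▸ center_reachable G δ w).symm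
  obtain ⟨p, hp⟩ := hr.exists_walk_length_eq_dist
  have hsupp : ∀ z ∈ p.support, center G δ z = u := by
    intro z hz
    have hspec := p.take_spec hz
    have hlen : (p.takeUntil z hz).length + (p.dropUntil z hz).length = p.length := by
      rw [← Walk.length_append, hspec]
    have h1 : G.dist w z ≤ (p.takeUntil z hz).length := dist_le _
    have h2 : G.dist z u ≤ (p.dropUntil z hz).length := dist_le _
    have hrz : G.Reachable w z := ⟨p.takeUntil z hz⟩
    have hzu : G.Reachable z u := ⟨p.dropUntil z hz⟩
    have htri : G.dist w u ≤ G.dist w z + G.dist z u := dist_tri G hrz hzu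
    have hle : G.dist w z + G.dist z u ≤ p.length := by omega
    rw [hp] at hle
    have heq : G.dist w z + G.dist z u = G.dist w u := le_antisymm hle htri
    apply center_eq_on_geodesic G δ hw hrz.symm
    rw [SimpleGraph.dist_comm (u := u) (v := z), SimpleGraph.dist_comm (u := z) (v := w),
      SimpleGraph.dist_comm (u := u) (v := w)]
    omega
  obtain ⟨q, hq⟩ := lift_walk G δ p hsupp
  refine ⟨q, ?_⟩
  rw [hq, hp]
  calc G.dist w u = G.dist u w := SimpleGraph.dist_comm ..
    _ ≤ δ u := by have := dist_center_le G δ w; rwa [hw] at this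

/-! ### Counting part -/

def WeakMax (δ : V → ℕ) (v u : V) : Prop :=
  u ∈ Ar G v ∧ ∀ u' ∈ Ar G v, fval G δ v u' ≤ fval G δ v u

lemma exists_weakMax (δ : V → ℕ) (v : V) : ∃ u, WeakMax G δ v u := by
  obtain ⟨c, hc, h⟩ := Finset.exists_max_image (Ar G v) (fval G δ v) ⟨v, self_mem_Ar G v⟩
  exact ⟨c, hc, h⟩

variable (q : ℝ)

noncomputable def wt {R : ℕ} (δ : V → Fin (R+1)) : ℝ := ∏ u, q ^ ((δ u : ℕ))

lemma wt_nonneg (hq0 : 0 ≤ q) {R : ℕ} (δ : V → Fin (R+1)) : 0 ≤ wt q δ :=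
  Finset.prod_nonneg (fun _ _ => pow_nonneg hq0 _)

lemma wt_pos (hq0 : 0 < q) {R : ℕ} (δ : V → Fin (R+1)) : 0 < wt q δ :=
  Finset.prod_pos (fun _ _ => pow_pos hq0 _)

lemma sum_wt {R : ℕ} :
    ∑ δ : V → Fin (R+1), wt (V := V) q δ
      = (∑ j : Fin (R+1), q ^ (j : ℕ)) ^ (Fintype.card V) := by
  calc ∑ δ : V → Fin (R+1), wt (V := V) q δ
      = ∑ δ : V → Fin (R+1), ∏ u : V, q ^ ((δ u : ℕ)) := rfl
    _ = ∏ _u : V, ∑ j : Fin (R+1), q ^ (j : ℕ) :=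
        (Fintype.prod_sum (fun (_ : V) (j : Fin (R+1)) => q ^ (j : ℕ))).symm
    _ = _ := by rw [Finset.prod_const, Finset.card_univ]

lemma marginal {R : ℕ} (u0 : V) (P : ℕ → Prop) [DecidablePred P] :
    ∑ δ : V → Fin (R+1), (if P ((δ u0 : ℕ)) then wt (V := V) q δ else 0)
      = (∑ j : Fin (R+1), if P (j : ℕ) then q ^ (j : ℕ) else 0)
        * (∑ j : Fin (R+1), q ^ (j : ℕ)) ^ (Fintype.card V - 1) := by
  classical
  have key : ∀ δ : V → Fin (R+1),
      (if P ((δ u0 : ℕ)) then wt (V := V) q δ else 0)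
        = ∏ u : V, (if u = u0 then (if P ((δ u : ℕ)) then q ^ ((δ u : ℕ)) else 0)
            else q ^ ((δ u : ℕ))) := by
    intro δ
    by_cases hP : P ((δ u0 : ℕ))
    · rw [if_pos hP]
      unfold wt
      refine Finset.prod_congr rfl (fun u _ => ?_)
      by_cases hu : u = u0
      · subst hu; simp [hP]
      · simp [hu]
    · rw [if_neg hP]
      symm
      apply Finset.prod_eq_zero (Finset.mem_univ u0)
      simp [hP]
  rw [Finset.sum_congr rfl (fun δ _ => key δ)]
  rw [← Fintype.prod_sum
    (fun (u : V) (j : Fin (R+1)) =>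
      if u = u0 then (if P (j : ℕ) then q ^ (j : ℕ) else 0) else q ^ (j : ℕ))]
  rw [← Finset.mul_prod_erase Finset.univ _ (Finset.mem_univ u0)]
  congr 1
  · simp
  · calc ∏ u ∈ Finset.univ.erase u0,
          (∑ j : Fin (R+1), if u = u0 then (if P (j:ℕ) then q ^ (j:ℕ) else 0) else q ^ (j:ℕ))
        = ∏ _u ∈ Finset.univ.erase u0, (∑ j : Fin (R+1), q ^ (j:ℕ)) := by
          refine Finset.prod_congr rfl (fun u hu => ?_)
          exact Finset.sum_congr rfl (fun j _ => by rw [if_neg (Finset.ne_of_mem_erase hu)])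
      _ = _ := by
          rw [Finset.prod_const, Finset.card_erase_of_mem (Finset.mem_univ u0), Finset.card_univ]

lemma count_bad (k M : ℕ) (hq0 : 0 < q) (hq1 : q < 1)
    (hZhalf : q ^ (2*k+M+1) ≤ 1/2) (v : V) :
    ∑ δ : V → Fin (2*k+M+1), (if Padded G (fun u => ((δ u : ℕ))) k v then 0 else wt (V := V) q δ)
      ≤ ((1 - q ^ (2*k+1)) + (Fintype.card V) * ((2*k+1) * q ^ M * (2*(1-q))))
        * ∑ δ : V → Fin (2*k+M+1), wt (V := V) q δ := by
  classical
  set m := Fintype.card V with hm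
  have hm1 : 1 ≤ m := Fintype.card_pos_iff.2 ⟨v⟩
  set Z : ℝ := ∑ j : Fin (2*k+M+1), q ^ (j:ℕ) with hZ
  set W : ℝ := ∑ δ : V → Fin (2*k+M+1), wt (V := V) q δ with hW
  have hWZ : W = Z ^ m := sum_wt q
  have hZpos : 0 < Z := by
    rw [hZ]
    exact Finset.sum_pos (fun j _ => pow_pos hq0 _) Finset.univ_nonempty
  have hWpos : 0 < W := by rw [hWZ]; positivity
  have h1q : 0 < 1 - q := by linarith
  have hZgeom : Z = (1 - q ^ (2*k+M+1)) / (1 - q) := by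
    rw [hZ, Fin.sum_univ_eq_sum_range, geom_sum_eq hq1.ne]
    rw [div_eq_div_iff (by linarith) (by linarith)]
    ring
  have hZhalf' : (1:ℝ)/2 ≤ 1 - q ^ (2*k+M+1) := by linarith
  have hZlb : 1/(2*(1-q)) ≤ Z := by
    have he : 1/(2*(1-q)) = (1/2)/(1-q) := (div_div 1 2 (1-q)).symm
    rw [he, hZgeom]
    gcongr
  have hZm1 : Z ^ (m-1) ≤ 2*(1-q) * W := by
    have h1 : Z ^ (m-1) = W / Z := by
      rw [eq_div_iff hZpos.ne', ← pow_succ, Nat.sub_add_cancel hm1, hWZ]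
    rw [h1, div_le_iff₀ hZpos]
    calc W = 2*(1-q) * W * (1/(2*(1-q))) := by field_simp
      _ ≤ 2*(1-q) * W * Z := by
          apply mul_le_mul_of_nonneg_left hZlb
          positivity
  set dn : (V → Fin (2*k+M+1)) → (V → ℕ) := fun δ u => ((δ u : ℕ)) with hdn
  set PF : Finset (V → Fin (2*k+M+1)) :=
    Finset.univ.filter (fun δ => Padded G (dn δ) k v) with hPF
  set DF : V → Finset (V → Fin (2*k+M+1)) :=
    fun u => Finset.univ.filter (fun δ => Dom G (dn δ) k v u) with hDF
  set WF : V → Finset (V → Fin (2*k+M+1)) :=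
    fun u => Finset.univ.filter (fun δ => WeakMax G (dn δ) v u) with hWF
  set EF : V → Finset (V → Fin (2*k+M+1)) :=
    fun u => Finset.univ.filter (fun δ => WeakMax G (dn δ) v u ∧ (δ u : ℕ) < M) with hEF
  set TF : V → Finset (V → Fin (2*k+M+1)) :=
    fun u => Finset.univ.filter (fun δ => M ≤ (δ u : ℕ)) with hTF
  -- (i) decomposition of the padded event
  have hPFdecomp : ∑ δ ∈ PF, wt (V := V) q δ
      = ∑ u ∈ Ar G v, ∑ δ ∈ DF u, wt (V := V) q δ := by
    have hcup : PF = (Ar G v).biUnion DF := by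
      ext δ
      simp only [hPF, hDF, Finset.mem_filter, Finset.mem_univ, true_and, Finset.mem_biUnion]
      constructor
      · rintro ⟨u, hu⟩; exact ⟨u, hu.1, hu⟩
      · rintro ⟨u, _, h⟩; exact ⟨u, h⟩
    rw [hcup]
    apply Finset.sum_biUnion
    intro u1 h1 u2 h2 hne
    apply Finset.disjoint_left.2
    intro δ hd1 hd2
    simp only [hDF, Finset.mem_filter, Finset.mem_univ, true_and] at hd1 hd2
    have e1 := hd1.2 u2 hd2.1 (Ne.symm hne)
    have e2 := hd2.2 u1 hd1.1 hne
    have : (0:ℤ) ≤ 2 * (k:ℤ) := by positivity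
    omega
  -- (ii) injection step
  have hinjstep : ∀ u ∈ Ar G v,
      q ^ (2*k+1) * ∑ δ ∈ EF u, wt (V := V) q δ ≤ ∑ δ ∈ DF u, wt (V := V) q δ := by
    intro u hu
    set ι : (V → Fin (2*k+M+1)) → (V → Fin (2*k+M+1)) :=
      fun δ => Function.update δ u ⟨((δ u : ℕ) + (2*k+1)) % (2*k+M+1),
        Nat.mod_lt _ (by omega)⟩ with hι
    have hιval : ∀ δ ∈ EF u, ((ι δ u : ℕ)) = (δ u : ℕ) + (2*k+1) := by
      intro δ hδ
      simp only [hEF, Finset.mem_filter] at hδ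
      simp only [hι, Function.update_self]
      exact Nat.mod_eq_of_lt (by omega)
    have hιne : ∀ (δ : V → Fin (2*k+M+1)) (u' : V), u' ≠ u → ι δ u' = δ u' := by
      intro δ u' hne
      simp [hι, Function.update_of_ne hne]
    have hwt : ∀ δ ∈ EF u, wt (V := V) q (ι δ) = q ^ (2*k+1) * wt (V := V) q δ := by
      intro δ hδ
      unfold wt
      rw [← Finset.mul_prod_erase Finset.univ _ (Finset.mem_univ u),
        ← Finset.mul_prod_erase Finset.univ (fun u' => q ^ ((δ u' : ℕ))) (Finset.mem_univ u)]
      rw [Finset.prod_congr rfl (fun u' hu' => by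
        rw [hιne δ u' (Finset.ne_of_mem_erase hu')])]
      rw [hιval δ hδ, pow_add]
      ring
    have hmem : ∀ δ ∈ EF u, ι δ ∈ DF u := by
      intro δ hδ
      have hδ' := hδ
      simp only [hEF, Finset.mem_filter, Finset.mem_univ, true_and] at hδ'
      simp only [hDF, Finset.mem_filter, Finset.mem_univ, true_and]
      refine ⟨hu, ?_⟩
      intro u' hu' hne
      have h1 := hδ'.1.2 u' hu'
      unfold fval at h1 ⊢
      have e1 : dn (ι δ) u' = (δ u' : ℕ) := by
        simp only [hdn]
        rw [hιne δ u' hne]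
      have e2 : dn (ι δ) u = (δ u : ℕ) + (2*k+1) := by
        simp only [hdn]
        exact hιval δ hδ
      rw [e1, e2]
      push_cast
      push_cast at h1
      linarith
    have hinj' : ∀ δ1 ∈ EF u, ∀ δ2 ∈ EF u, ι δ1 = ι δ2 → δ1 = δ2 := by
      intro δ1 h1 δ2 h2 he
      funext u'
      by_cases hne : u' = u
      · subst hne
        have h3 := congrArg (fun g => ((g u' : ℕ))) he
        rw [hιval δ1 h1, hιval δ2 h2] at h3
        exact Fin.ext (by omega)
      · have h3 := congrArg (fun g => g u') he
        rwa [hιne δ1 u' hne, hιne δ2 u' hne] at h3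
    calc q ^ (2*k+1) * ∑ δ ∈ EF u, wt (V := V) q δ
        = ∑ δ ∈ EF u, wt (V := V) q (ι δ) := by
          rw [Finset.mul_sum]
          exact Finset.sum_congr rfl (fun δ hδ => (hwt δ hδ).symm)
      _ = ∑ δ ∈ (EF u).image ι, wt (V := V) q δ := (Finset.sum_image hinj').symm
      _ ≤ ∑ δ ∈ DF u, wt (V := V) q δ := by
          apply Finset.sum_le_sum_of_subset_of_nonneg
          · intro δ hδ
            obtain ⟨δ0, h0, rfl⟩ := Finset.mem_image.1 hδ
            exact hmem δ0 h0
          · intro δ _ _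
            exact wt_nonneg q hq0.le δ
  -- (iii) weak maxima cover everything
  have hcover : W ≤ ∑ u ∈ Ar G v, ∑ δ ∈ WF u, wt (V := V) q δ := by
    have hrw : ∀ u, ∑ δ ∈ WF u, wt (V := V) q δ
        = ∑ δ : V → Fin (2*k+M+1), (if WeakMax G (dn δ) v u then wt (V := V) q δ else 0) := by
      intro u
      rw [hWF, Finset.sum_filter]
    rw [Finset.sum_congr rfl (fun u _ => hrw u), Finset.sum_comm, hW]
    apply Finset.sum_le_sum
    intro δ _
    obtain ⟨u0, hu0⟩ := exists_weakMax G (dn δ) v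
    calc wt (V := V) q δ
        = (if WeakMax G (dn δ) v u0 then wt (V := V) q δ else 0) := by rw [if_pos hu0]
      _ ≤ ∑ u ∈ Ar G v, (if WeakMax G (dn δ) v u then wt (V := V) q δ else 0) := by
          apply Finset.single_le_sum (fun u _ => ?_) hu0.1
          by_cases h : WeakMax G (dn δ) v u
          · rw [if_pos h]; exact (wt_nonneg q hq0.le δ)
          · rw [if_neg h]
  -- (iv) split weak maxima
  have hsplit : ∀ u, ∑ δ ∈ WF u, wt (V := V) q δ
      ≤ ∑ δ ∈ EF u, wt (V := V) q δ + ∑ δ ∈ TF u, wt (V := V) q δ := by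
    intro u
    have hsub : WF u ⊆ EF u ∪ TF u := by
      intro δ hδ
      simp only [hWF, hEF, hTF, Finset.mem_filter, Finset.mem_univ, true_and,
        Finset.mem_union] at hδ ⊢
      by_cases hlt : (δ u : ℕ) < M
      · exact Or.inl ⟨hδ, hlt⟩
      · exact Or.inr (by omega)
    have hdisj : Disjoint (EF u) (TF u) := by
      apply Finset.disjoint_left.2
      intro δ h1 h2
      simp only [hEF, hTF, Finset.mem_filter, Finset.mem_univ, true_and] at h1 h2
      omega
    calc ∑ δ ∈ WF u, wt (V := V) q δ
        ≤ ∑ δ ∈ EF u ∪ TF u, wt (V := V) q δ :=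
          Finset.sum_le_sum_of_subset_of_nonneg hsub (fun δ _ _ => wt_nonneg q hq0.le δ)
      _ = _ := Finset.sum_union hdisj
  -- (v) tail bound
  have htail : ∀ u, ∑ δ ∈ TF u, wt (V := V) q δ ≤ (2*k+1) * q ^ M * (2*(1-q)) * W := by
    intro u
    have hmarg : ∑ δ ∈ TF u, wt (V := V) q δ
        = (∑ j : Fin (2*k+M+1), if M ≤ (j:ℕ) then q ^ (j:ℕ) else 0) * Z ^ (m-1) := by
      rw [hTF, Finset.sum_filter]
      exact marginal q u (fun t => M ≤ t)
    have hStail : (∑ j : Fin (2*k+M+1), if M ≤ (j:ℕ) then q ^ (j:ℕ) else 0)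
        ≤ (2*k+1) * q ^ M := by
      rw [← Finset.sum_filter]
      have hcard : (Finset.univ.filter (fun j : Fin (2*k+M+1) => M ≤ (j:ℕ))).card ≤ 2*k+1 := by
        have h := Finset.card_le_card_of_injOn
          (s := Finset.univ.filter (fun j : Fin (2*k+M+1) => M ≤ (j:ℕ)))
          (t := Finset.range (2*k+1)) (f := fun j : Fin (2*k+M+1) => (j:ℕ) - M) ?_ ?_
        · simpa using h
        · intro j hj
          simp only [Finset.mem_coe, Finset.mem_filter, Finset.mem_univ, true_and] at hj
          simp only [Finset.mem_coe, Finset.mem_range]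
          omega
        · intro j1 h1 j2 h2 he
          simp only [Finset.mem_coe, Finset.mem_filter, Finset.mem_univ, true_and] at h1 h2
          simp only at he
          exact Fin.ext (by omega)
      calc ∑ j ∈ Finset.univ.filter (fun j : Fin (2*k+M+1) => M ≤ (j:ℕ)), q ^ (j:ℕ)
          ≤ (Finset.univ.filter (fun j : Fin (2*k+M+1) => M ≤ (j:ℕ))).card • q ^ M := by
            apply Finset.sum_le_card_nsmul
            intro j hj
            simp only [Finset.mem_filter, Finset.mem_univ, true_and] at hj
            exact pow_le_pow_of_le_one hq0.le hq1.le hj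
        _ ≤ (2*k+1) * q ^ M := by
            rw [nsmul_eq_mul]
            apply mul_le_mul_of_nonneg_right _ (by positivity)
            exact_mod_cast hcard
    calc ∑ δ ∈ TF u, wt (V := V) q δ
        = (∑ j : Fin (2*k+M+1), if M ≤ (j:ℕ) then q ^ (j:ℕ) else 0) * Z ^ (m-1) := hmarg
      _ ≤ ((2*k+1) * q ^ M) * (2*(1-q) * W) := by
          apply mul_le_mul hStail hZm1 (by positivity) (by positivity)
      _ = (2*k+1) * q ^ M * (2*(1-q)) * W := by ring
  -- (vi) combine
  set B : ℝ := (2*k+1) * q ^ M * (2*(1-q)) * W with hB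
  have hBnn : 0 ≤ B := by rw [hB]; positivity
  have hcardAr : ((Ar G v).card : ℝ) ≤ m := by
    exact_mod_cast Finset.card_le_card (Finset.subset_univ (Ar G v))
  have hEFsum : W - m * B ≤ ∑ u ∈ Ar G v, ∑ δ ∈ EF u, wt (V := V) q δ := by
    have h1 : ∑ u ∈ Ar G v, ∑ δ ∈ WF u, wt (V := V) q δ
        ≤ ∑ u ∈ Ar G v, (∑ δ ∈ EF u, wt (V := V) q δ + B) := by
      apply Finset.sum_le_sum
      intro u _
      calc ∑ δ ∈ WF u, wt (V := V) q δ
          ≤ ∑ δ ∈ EF u, wt (V := V) q δ + ∑ δ ∈ TF u, wt (V := V) q δ := hsplit u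
        _ ≤ ∑ δ ∈ EF u, wt (V := V) q δ + B := by
            have h := htail u
            linarith
    have h2 : ∑ u ∈ Ar G v, (∑ δ ∈ EF u, wt (V := V) q δ + B)
        = (∑ u ∈ Ar G v, ∑ δ ∈ EF u, wt (V := V) q δ) + (Ar G v).card * B := by
      rw [Finset.sum_add_distrib, Finset.sum_const, nsmul_eq_mul]
    have h3 : ((Ar G v).card : ℝ) * B ≤ m * B := mul_le_mul_of_nonneg_right hcardAr hBnn
    have := hcover.trans (h1.trans_eq h2)
    linarith
  have hPFge : q ^ (2*k+1) * W - m * B ≤ ∑ δ ∈ PF, wt (V := V) q δ := by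
    have hq2k : q ^ (2*k+1) ≤ 1 := pow_le_one₀ hq0.le hq1.le
    have hEFnn : 0 ≤ ∑ u ∈ Ar G v, ∑ δ ∈ EF u, wt (V := V) q δ := by
      apply Finset.sum_nonneg; intro u _
      apply Finset.sum_nonneg; intro δ _
      exact wt_nonneg q hq0.le δ
    calc q ^ (2*k+1) * W - m * B
        ≤ q ^ (2*k+1) * ((∑ u ∈ Ar G v, ∑ δ ∈ EF u, wt (V := V) q δ) + m * B) - m * B := by
          have := hEFsum
          nlinarith [pow_nonneg hq0.le (2*k+1)]
      _ = q ^ (2*k+1) * (∑ u ∈ Ar G v, ∑ δ ∈ EF u, wt (V := V) q δ)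
            + (q ^ (2*k+1) - 1) * (m * B) := by ring
      _ ≤ q ^ (2*k+1) * (∑ u ∈ Ar G v, ∑ δ ∈ EF u, wt (V := V) q δ) := by
          have hmB : 0 ≤ (m:ℝ) * B := by positivity
          nlinarith
      _ = ∑ u ∈ Ar G v, q ^ (2*k+1) * ∑ δ ∈ EF u, wt (V := V) q δ := by
          rw [Finset.mul_sum]
      _ ≤ ∑ u ∈ Ar G v, ∑ δ ∈ DF u, wt (V := V) q δ :=
          Finset.sum_le_sum (fun u hu => hinjstep u hu)
      _ = ∑ δ ∈ PF, wt (V := V) q δ := hPFdecomp.symm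
  -- final accounting
  have hLHS : ∑ δ : V → Fin (2*k+M+1),
      (if Padded G (fun u => ((δ u : ℕ))) k v then 0 else wt (V := V) q δ)
      = W - ∑ δ ∈ PF, wt (V := V) q δ := by
    have h1 : ∑ δ ∈ PF, wt (V := V) q δ
        + ∑ δ ∈ Finset.univ.filter (fun δ => ¬ Padded G (dn δ) k v), wt (V := V) q δ = W := by
      rw [hPF, hW]
      exact Finset.sum_filter_add_sum_filter_not _ _ _
    have h2 : ∑ δ : V → Fin (2*k+M+1),
        (if Padded G (fun u => ((δ u : ℕ))) k v then 0 else wt (V := V) q δ)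
        = ∑ δ ∈ Finset.univ.filter (fun δ => ¬ Padded G (dn δ) k v), wt (V := V) q δ := by
      rw [Finset.sum_filter]
      apply Finset.sum_congr rfl
      intro δ _
      by_cases h : Padded G (dn δ) k v
      · simp only [hdn] at h; rw [if_pos h, if_neg (not_not.2 h)]
      · simp only [hdn] at h; rw [if_neg h, if_pos h]
    linarith
  rw [hLHS]
  have : W - (q ^ (2*k+1) * W - m * B)
      = ((1 - q ^ (2*k+1)) + m * ((2*k+1) * q ^ M * (2*(1-q)))) * W := by
    rw [hB]; ring
  linarith [hPFge]

/-! ### Numerics -/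

noncomputable def qdef (k : ℕ) (x : ℝ) : ℝ := 1 - 1/(2*x*(2*(k:ℝ)+1))

noncomputable def Mdef (n k : ℕ) (x : ℝ) : ℕ := ⌈(2*x*(2*(k:ℝ)+1)) * Real.log (2*n)⌉₊

section Numerics

variable {n k : ℕ} {x : ℝ} (hn : 2 ≤ n) (hk : 1 ≤ k) (hx : 1 ≤ x)
include hk hx

lemma p_pos : 0 < 1/(2*x*(2*(k:ℝ)+1)) := by
  have hk' : (1:ℝ) ≤ (k:ℝ) := by exact_mod_cast hk
  positivity

lemma p_small : 1/(2*x*(2*(k:ℝ)+1)) ≤ 1/6 := by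
  have hk' : (1:ℝ) ≤ (k:ℝ) := by exact_mod_cast hk
  rw [div_le_div_iff₀ (by positivity) (by norm_num)]
  nlinarith

lemma q_pos : 0 < qdef k x := by
  have := p_small hk hx
  unfold qdef
  linarith

lemma q_lt_one : qdef k x < 1 := by
  have := p_pos hk hx
  unfold qdef
  linarith

include hn

lemma qM_le : qdef k x ^ (Mdef n k x) ≤ 1/(2*n) := by
  set p : ℝ := 1/(2*x*(2*(k:ℝ)+1)) with hp
  have hppos := p_pos hk hx
  have hlog : 0 ≤ Real.log (2*n) := by
    apply Real.log_nonneg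
    have : (2:ℝ) ≤ (n:ℝ) := by exact_mod_cast hn
    nlinarith
  have hq_exp : qdef k x ≤ Real.exp (-p) := by
    have := Real.add_one_le_exp (-p)
    unfold qdef
    linarith
  have h1 : qdef k x ^ (Mdef n k x) ≤ Real.exp (-p) ^ (Mdef n k x) :=
    pow_le_pow_left₀ (q_pos hk hx).le hq_exp _
  have h2 : Real.exp (-p) ^ (Mdef n k x) = Real.exp (-(((Mdef n k x) : ℝ) * p)) := by
    rw [← Real.exp_nat_mul]
    ring_nf
  have h3 : Real.log (2*n) ≤ ((Mdef n k x) : ℝ) * p := by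
    have hM : (2*x*(2*(k:ℝ)+1)) * Real.log (2*n) ≤ ((Mdef n k x) : ℝ) := Nat.le_ceil _
    have hinv : (2*x*(2*(k:ℝ)+1)) * p = 1 := by
      rw [hp]
      field_simp
    calc Real.log (2*n) = ((2*x*(2*(k:ℝ)+1)) * Real.log (2*n)) * p := by
          rw [mul_comm (2*x*(2*(k:ℝ)+1)), mul_assoc, hinv, mul_one]
      _ ≤ ((Mdef n k x) : ℝ) * p := by
          apply mul_le_mul_of_nonneg_right hM hppos.le
  have h4 : Real.exp (-(((Mdef n k x) : ℝ) * p)) ≤ Real.exp (-(Real.log (2*n))) := by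
    apply Real.exp_le_exp.2
    linarith
  have h5 : Real.exp (-(Real.log (2*n))) = 1/(2*n) := by
    rw [Real.exp_neg, Real.exp_log (by positivity : (0:ℝ) < 2*n)]
    rw [one_div]
  calc qdef k x ^ (Mdef n k x) ≤ Real.exp (-p) ^ (Mdef n k x) := h1
    _ = Real.exp (-(((Mdef n k x) : ℝ) * p)) := h2
    _ ≤ Real.exp (-(Real.log (2*n))) := h4
    _ = 1/(2*n) := h5

lemma qZhalf : qdef k x ^ (2*k+(Mdef n k x)+1) ≤ 1/2 := by
  have h1 : qdef k x ^ (2*k+(Mdef n k x)+1) ≤ qdef k x ^ (Mdef n k x) :=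
    pow_le_pow_of_le_one (q_pos hk hx).le (q_lt_one hk hx).le (by omega)
  have h2 := qM_le hn hk hx
  have hn' : (2:ℝ) ≤ (n:ℝ) := by exact_mod_cast hn
  have : 1/(2*(n:ℝ)) ≤ 1/2 := by
    rw [div_le_div_iff₀ (by linarith) (by norm_num)]
    linarith
  linarith

lemma main_bound {m : ℕ} (hm : m ≤ n) :
    (1 - qdef k x ^ (2*k+1)) + (m:ℝ) * ((2*(k:ℝ)+1) * qdef k x ^ (Mdef n k x) * (2*(1 - qdef k x)))
      ≤ 1/x := by
  set p : ℝ := 1/(2*x*(2*(k:ℝ)+1)) with hp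
  have hppos := p_pos hk hx
  have hk' : (1:ℝ) ≤ (k:ℝ) := by exact_mod_cast hk
  have hxpos : (0:ℝ) < x := by linarith
  have hkp : (2*(k:ℝ)+1) * p = 1/(2*x) := by
    rw [hp]
    field_simp
  -- Bernoulli
  have hbern : 1 - qdef k x ^ (2*k+1) ≤ 1/(2*x) := by
    have h := one_add_mul_le_pow (a := -p) (by nlinarith [p_small hk hx, p_pos hk hx]) (2*k+1)
    have h2 : (1:ℝ) + -p = qdef k x := by unfold qdef; rw [hp]; ring
    rw [h2] at h
    have h3 : (1:ℝ) + ((2*k+1 : ℕ):ℝ) * (-p) = 1 - (2*(k:ℝ)+1)*p := by push_cast; ring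
    rw [h3] at h
    linarith [hkp, h]
  -- tail part
  have h1mq : 1 - qdef k x = p := by unfold qdef; rw [hp]; ring
  have htail : (m:ℝ) * ((2*(k:ℝ)+1) * qdef k x ^ (Mdef n k x) * (2*(1 - qdef k x))) ≤ 1/(2*x) := by
    have hqM := qM_le hn hk hx
    have hmn : (m:ℝ) ≤ (n:ℝ) := by exact_mod_cast hm
    have hn' : (2:ℝ) ≤ (n:ℝ) := by exact_mod_cast hn
    have hqMnn : 0 ≤ qdef k x ^ (Mdef n k x) := pow_nonneg (q_pos hk hx).le _
    calc (m:ℝ) * ((2*(k:ℝ)+1) * qdef k x ^ (Mdef n k x) * (2*(1 - qdef k x)))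
        = (m:ℝ) * qdef k x ^ (Mdef n k x) * (2 * ((2*(k:ℝ)+1) * p)) := by
          rw [h1mq]; ring
      _ = (m:ℝ) * qdef k x ^ (Mdef n k x) * (1/x) := by rw [hkp]; ring
      _ ≤ (n:ℝ) * (1/(2*(n:ℝ))) * (1/x) := by
          have h0 : (m:ℝ) * qdef k x ^ (Mdef n k x) ≤ (n:ℝ) * (1/(2*(n:ℝ))) := by
            apply mul_le_mul hmn hqM hqMnn (by linarith)
          apply mul_le_mul_of_nonneg_right h0 (by positivity)
      _ = 1/(2*x) := by
          have hx0 : x ≠ 0 := by positivity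
          have hn0 : (n:ℝ) ≠ 0 := by positivity
          field_simp
  have hx0 : x ≠ 0 := by positivity
  have hsum : 1/(2*x) + 1/(2*x) = 1/x := by
    rw [← add_div, div_eq_div_iff (by positivity) (by positivity)]
    ring
  linarith

lemma beta_bound : (2*(2*(k:ℝ)+(Mdef n k x)):ℝ) ≤ 100*(k:ℝ)*x*(Real.logb 2 n)^3 := by
  set L : ℝ := Real.logb 2 n with hL
  have hk' : (1:ℝ) ≤ (k:ℝ) := by exact_mod_cast hk
  have hn' : (2:ℝ) ≤ (n:ℝ) := by exact_mod_cast hn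
  have hlog2pos : (0:ℝ) < Real.log 2 := Real.log_pos (by norm_num)
  have hlog2le1 : Real.log 2 ≤ 1 := by
    have := Real.log_two_lt_d9
    linarith
  have hlogn : 0 < Real.log n := Real.log_pos (by linarith)
  have hlogmono : Real.log 2 ≤ Real.log n := by
    apply (Real.log_le_log_iff (by norm_num) (by linarith)).2 hn'
  have hL1 : 1 ≤ L := by
    rw [hL, ← Real.log_div_log, le_div_iff₀ hlog2pos, one_mul]
    exact hlogmono
  have hlog2n : Real.log (2*n) ≤ 2 * Real.log n := by
    rw [Real.log_mul (by norm_num) (by positivity)]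
    linarith
  have hlogL : Real.log n ≤ L := by
    rw [hL, ← Real.log_div_log, le_div_iff₀ hlog2pos]
    nlinarith
  have hM : ((Mdef n k x) : ℝ) ≤ (2*x*(2*(k:ℝ)+1)) * Real.log (2*n) + 1 := by
    apply le_of_lt
    apply Nat.ceil_lt_add_one
    have h0 : 0 ≤ Real.log (2*n) := Real.log_nonneg (by nlinarith)
    have h1 : (0:ℝ) ≤ 2*x*(2*(k:ℝ)+1) := by positivity
    exact mul_nonneg h1 h0
  have hL0 : (0:ℝ) ≤ L := by linarith
  have hL3 : L ≤ L^3 := by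
    nlinarith [mul_nonneg (mul_nonneg (sub_nonneg.2 hL1) hL0) (by linarith : (0:ℝ) ≤ L + 1)]
  have hxL : 1 ≤ x*L := by nlinarith
  have hkle : (k:ℝ) ≤ (k:ℝ)*x*L := by nlinarith
  have hfin : (k:ℝ)*x*L ≤ (k:ℝ)*x*L^3 := by
    have h0 : (0:ℝ) ≤ (k:ℝ)*x := by positivity
    nlinarith [mul_nonneg h0 (sub_nonneg.2 hL3)]
  have hMb : ((Mdef n k x) : ℝ) ≤ 13*(k:ℝ)*x*L := by
    have h1 : (2*x*(2*(k:ℝ)+1)) * Real.log (2*n) ≤ (2*x*(2*(k:ℝ)+1)) * (2*L) := by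
      apply mul_le_mul_of_nonneg_left (by linarith) (by nlinarith)
    have h2 : (2*x*(2*(k:ℝ)+1)) * (2*L) ≤ 12*(k:ℝ)*x*L := by nlinarith
    linarith
  have h100 : (0:ℝ) ≤ (k:ℝ)*x*L^3 := by
    have : (0:ℝ) ≤ L^3 := by nlinarith
    positivity
  linarith

end Numerics

end Statement3Aux

namespace Statement3Aux

lemma L_ge_one {n : ℕ} (hn : 2 ≤ n) : 1 ≤ Real.logb 2 n := by
  have hn' : (2:ℝ) ≤ (n:ℝ) := by exact_mod_cast hn
  have hlog2pos : (0:ℝ) < Real.log 2 := Real.log_pos (by norm_num)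
  rw [← Real.log_div_log, le_div_iff₀ hlog2pos, one_mul]
  exact (Real.log_le_log_iff (by norm_num) (by linarith)).2 hn'

lemma choose_shifts {V : Type} [Fintype V] [DecidableEq V] (G : SimpleGraph V)
    {n k : ℕ} {x : ℝ} (hn : 2 ≤ n) (hk : 1 ≤ k) (hx : 1 ≤ x) (hcard : Fintype.card V ≤ n)
    (S : Set V) :
    ∃ δ0 : V → Fin (2*k+(Mdef n k x)+1),
      (((Set.toFinite S).toFinset.filter
          (fun v => ¬ Padded G (fun u => ((δ0 u : ℕ))) k v)).card : ℝ)
        ≤ (S.ncard : ℝ) / x := by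
  classical
  set M := Mdef n k x with hM
  set q := qdef k x with hq
  have hq0 : 0 < q := q_pos hk hx
  have hq1 : q < 1 := q_lt_one hk hx
  have hZhalf : q ^ (2*k+M+1) ≤ 1/2 := qZhalf hn hk hx
  have hxpos : (0:ℝ) < x := by linarith
  set Sfin := (Set.toFinite S).toFinset with hSfin
  have hS : (S.ncard : ℝ) = (Sfin.card : ℝ) := by
    rw [Set.ncard_eq_toFinset_card S (Set.toFinite S)]
  set W : ℝ := ∑ δ : V → Fin (2*k+M+1), wt (V := V) q δ with hW
  have hWpos : 0 < W := by
    rw [hW]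
    have : Nonempty (V → Fin (2*k+M+1)) := ⟨fun _ => ⟨0, by omega⟩⟩
    exact Finset.sum_pos (fun δ _ => wt_pos q hq0 δ) Finset.univ_nonempty
  -- per-vertex bound
  have hver : ∀ v : V,
      ∑ δ : V → Fin (2*k+M+1),
        (if Padded G (fun u => ((δ u : ℕ))) k v then 0 else wt (V := V) q δ)
      ≤ (1/x) * W := by
    intro v
    have h1 := count_bad G q k M hq0 hq1 hZhalf v
    have h2 : (1 - q ^ (2*k+1)) + (Fintype.card V : ℝ) * ((2*(k:ℝ)+1) * q ^ M * (2*(1-q)))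
        ≤ 1/x := by
      have h3 := main_bound (n := n) (k := k) (x := x) hn hk hx hcard
      rw [← hM, ← hq] at h3
      exact h3
    calc ∑ δ : V → Fin (2*k+M+1),
          (if Padded G (fun u => ((δ u : ℕ))) k v then 0 else wt (V := V) q δ)
        ≤ ((1 - q ^ (2*k+1)) + (Fintype.card V) * ((2*k+1) * q ^ M * (2*(1-q)))) * W := h1
      _ ≤ (1/x) * W := mul_le_mul_of_nonneg_right h2 hWpos.le
  -- expectation over shifts
  set F : (V → Fin (2*k+M+1)) → ℕ :=
    fun δ => (Sfin.filter (fun v => ¬ Padded G (fun u => ((δ u : ℕ))) k v)).card with hF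
  have hsum : ∑ δ : V → Fin (2*k+M+1), wt (V := V) q δ * (F δ : ℝ)
      ≤ ((Sfin.card : ℝ)/x) * W := by
    have hpt : ∀ δ : V → Fin (2*k+M+1), wt (V := V) q δ * (F δ : ℝ)
        = ∑ v ∈ Sfin, (if Padded G (fun u => ((δ u : ℕ))) k v then 0 else wt (V := V) q δ) := by
      intro δ
      simp only [hF]
      rw [Finset.card_filter]
      push_cast
      rw [Finset.mul_sum]
      apply Finset.sum_congr rfl
      intro v _
      by_cases h : Padded G (fun u => ((δ u : ℕ))) k v
      · rw [if_pos h, if_neg (not_not.2 h)]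
        ring
      · rw [if_neg h, if_pos h]
        ring
    rw [Finset.sum_congr rfl (fun δ _ => hpt δ), Finset.sum_comm]
    calc ∑ v ∈ Sfin, ∑ δ : V → Fin (2*k+M+1),
          (if Padded G (fun u => ((δ u : ℕ))) k v then 0 else wt (V := V) q δ)
        ≤ ∑ _v ∈ Sfin, (1/x) * W := Finset.sum_le_sum (fun v _ => hver v)
      _ = ((Sfin.card : ℝ)/x) * W := by
          rw [Finset.sum_const, nsmul_eq_mul]
          ring
  by_contra hc
  push_neg at hc
  have hstrict : ((Sfin.card : ℝ)/x) * W < ∑ δ : V → Fin (2*k+M+1), wt (V := V) q δ * (F δ : ℝ) := by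
    have : Nonempty (V → Fin (2*k+M+1)) := ⟨fun _ => ⟨0, by omega⟩⟩
    calc ((Sfin.card : ℝ)/x) * W = ∑ δ : V → Fin (2*k+M+1), wt (V := V) q δ * ((Sfin.card : ℝ)/x) := by
          rw [← Finset.sum_mul, ← hW]
          ring
      _ < ∑ δ : V → Fin (2*k+M+1), wt (V := V) q δ * (F δ : ℝ) := by
          apply Finset.sum_lt_sum_of_nonempty Finset.univ_nonempty
          intro δ _
          apply mul_lt_mul_of_pos_left _ (wt_pos q hq0 δ)
          have := hc δ
          rw [hS] at this
          exact this
  linarith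

end Statement3Aux

open Statement3Aux in
theorem statement3 :
    ∃ c₁ c₂ : ℝ, 0 < c₁ ∧ 0 < c₂ ∧
      ∀ (n : ℕ), 2 ≤ n →
      ∀ (V : Type) [Fintype V] (G : SimpleGraph V),
        Fintype.card V ≤ n →
        ∀ S : Set V, ∀ k : ℕ, 1 ≤ k → ∀ x : ℝ, 1 ≤ x →
          ∃ CC : ClusterCollection G
              ⌈c₁ * k * x * (Real.logb 2 n) ^ 3⌉₊
              ⌈c₂ * Real.logb 2 n * min (k : ℝ) (x * (Real.logb 2 n) ^ 2)⌉₊,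
            (∀ i, CC.cluster i ⊆ S) ∧
            ((1 - 1 / x) * S.ncard ≤ ((⋃ i, CC.cluster i).ncard : ℝ)) ∧
            (∀ i j, i ≠ j → FarApart G k (CC.cluster i) (CC.cluster j)) := by
  classical
  refine ⟨100, 1, by norm_num, by norm_num, ?_⟩
  intro n hn V _ G hcard S k hk x hx
  set L : ℝ := Real.logb 2 n with hLdef
  have hL1 : 1 ≤ L := L_ge_one hn
  have hk' : (1:ℝ) ≤ (k:ℝ) := by exact_mod_cast hk
  have hxpos : (0:ℝ) < x := by linarith
  set β : ℕ := ⌈(100:ℝ) * k * x * L ^ 3⌉₊ with hβdef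
  set κ : ℕ := ⌈(1:ℝ) * L * min (k : ℝ) (x * L ^ 2)⌉₊ with hκdef
  -- κ ≥ 1
  have hκ1 : 1 ≤ κ := by
    rw [hκdef, Nat.one_le_ceil_iff]
    have h1 : (1:ℝ) ≤ min (k:ℝ) (x * L^2) := by
      apply le_min hk'
      nlinarith
    nlinarith
  -- β ≥ 2 * (2k + M)
  have hβ2R : 2*(2*k+(Mdef n k x)) ≤ β := by
    have h1 := beta_bound (n := n) (k := k) (x := x) hn hk hx
    rw [← hLdef] at h1
    have h2 : ((2*(2*k+(Mdef n k x)) : ℕ) : ℝ) ≤ (100:ℝ) * k * x * L ^ 3 := by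
      push_cast
      push_cast at h1
      linarith
    have h3 := h2.trans (Nat.le_ceil _)
    rw [hβdef]
    exact_mod_cast h3
  -- choose shifts
  obtain ⟨δ0, hδ0⟩ := choose_shifts G hn hk hx hcard S
  set δℕ : V → ℕ := fun u => ((δ0 u : ℕ)) with hδℕ
  have hδle : ∀ u, δℕ u ≤ 2*k+(Mdef n k x) := fun u => Nat.le_of_lt_succ (δ0 u).isLt
  set e : V ≃ Fin (Fintype.card V) := Fintype.equivFin V with hedef
  -- center of its own cluster
  have hcen : ∀ (w : V) (u : V), center G δℕ w = u → center G δℕ u = u := by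
    intro w u hw
    have hru : G.Reachable u w := hw ▸ center_reachable G δℕ w
    apply center_eq_on_geodesic G δℕ hw hru
    rw [SimpleGraph.dist_self]
    omega
  refine ⟨{
    p := Fintype.card V
    cluster := fun i => {v | v ∈ S ∧ Padded G δℕ k v ∧ center G δℕ v = e.symm i}
    tree := fun i => treeSub G δℕ (e.symm i)
    disjoint := ?_
    subset_tree := ?_
    connected := ?_
    radius := ?_
    congestion := ?_ }, ?_, ?_, ?_⟩
  · -- disjoint
    intro i j hij
    rw [Set.disjoint_left]
    rintro v ⟨_, _, hvi⟩ ⟨_, _, hvj⟩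
    exact hij (e.symm.injective (hvi ▸ hvj ▸ rfl))
  · -- subset_tree
    rintro i v ⟨_, _, hv⟩
    exact hv
  · -- connected
    intro i a b
    have ha : center G δℕ a.1 = e.symm i := a.2
    have hb : center G δℕ b.1 = e.symm i := b.2
    have hu : center G δℕ (e.symm i) = e.symm i := hcen a.1 _ ha
    obtain ⟨qa, _⟩ := exists_walk_to_center G δℕ ha hu
    obtain ⟨qb, _⟩ := exists_walk_to_center G δℕ hb hu
    exact ⟨qa.append qb.reverse⟩
  · -- radius
    intro i a b
    have ha : center G δℕ a.1 = e.symm i := a.2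
    have hb : center G δℕ b.1 = e.symm i := b.2
    have hu : center G δℕ (e.symm i) = e.symm i := hcen a.1 _ ha
    obtain ⟨qa, hqa⟩ := exists_walk_to_center G δℕ ha hu
    obtain ⟨qb, hqb⟩ := exists_walk_to_center G δℕ hb hu
    refine ⟨qa.append qb.reverse, ?_⟩
    rw [SimpleGraph.Walk.length_append, SimpleGraph.Walk.length_reverse]
    have h1 := hδle (e.symm i)
    omega
  · -- congestion
    intro ed hed
    induction ed with
    | h a b =>
      by_cases hne : {i : Fin (Fintype.card V) | s(a, b) ∈ (treeSub G δℕ (e.symm i)).edgeSet}.Nonempty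
      · have hsub : {i : Fin (Fintype.card V) | s(a, b) ∈ (treeSub G δℕ (e.symm i)).edgeSet}
            ⊆ {e (center G δℕ a)} := by
          intro i hi
          have hadj : (treeSub G δℕ (e.symm i)).Adj a b := (SimpleGraph.Subgraph.mem_edgeSet).1 hi
          have hca : center G δℕ a = e.symm i := hadj.2.1
          simp only [Set.mem_singleton_iff]
          rw [hca]
          simp
        calc {i : Fin (Fintype.card V) | s(a, b) ∈ (treeSub G δℕ (e.symm i)).edgeSet}.ncard
            ≤ ({e (center G δℕ a)} : Set (Fin (Fintype.card V))).ncard :=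
              Set.ncard_le_ncard hsub (Set.finite_singleton _)
          _ = 1 := Set.ncard_singleton _
          _ ≤ κ := hκ1
      · rw [Set.not_nonempty_iff_eq_empty] at hne
        rw [hne, Set.ncard_empty]
        omega
  · -- clusters in S
    rintro i v ⟨hv, _, _⟩
    exact hv
  · -- coverage
    set Sfin := (Set.toFinite S).toFinset with hSfin
    have hS : (S.ncard : ℝ) = (Sfin.card : ℝ) := by
      rw [Set.ncard_eq_toFinset_card S (Set.toFinite S)]
    have hUeq : (⋃ i, {v | v ∈ S ∧ Padded G δℕ k v ∧ center G δℕ v = e.symm i})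
        = ↑(Sfin.filter (fun v => Padded G δℕ k v)) := by
      ext v
      simp only [Set.mem_iUnion, Set.mem_setOf_eq, Finset.coe_filter]
      constructor
      · rintro ⟨i, hv1, hv2, _⟩
        exact ⟨(Set.Finite.mem_toFinset _).2 hv1, hv2⟩
      · rintro ⟨hv1, hv2⟩
        exact ⟨e (center G δℕ v), (Set.Finite.mem_toFinset _).1 hv1, hv2,
          (e.symm_apply_apply _).symm⟩
    rw [hUeq, Set.ncard_coe_finset]
    have hcards : (Sfin.filter (fun v => Padded G δℕ k v)).card
        + (Sfin.filter (fun v => ¬ Padded G δℕ k v)).card = Sfin.card :=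
      Finset.card_filter_add_card_filter_not _
    have hbad : ((Sfin.filter (fun v => ¬ Padded G δℕ k v)).card : ℝ) ≤ (S.ncard : ℝ) / x := hδ0
    have hterm : (1 - 1/x) * (S.ncard : ℝ) = (S.ncard : ℝ) - (S.ncard : ℝ)/x := by
      field_simp
    have hcards' : ((Sfin.filter (fun v => Padded G δℕ k v)).card : ℝ)
        = (Sfin.card : ℝ) - ((Sfin.filter (fun v => ¬ Padded G δℕ k v)).card : ℝ) := by
      have h2 : ((Sfin.filter (fun v => Padded G δℕ k v)).card : ℝ)
          + ((Sfin.filter (fun v => ¬ Padded G δℕ k v)).card : ℝ) = (Sfin.card : ℝ) := by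
        exact_mod_cast hcards
      linarith
    rw [hterm, hcards']
    linarith [hS, hbad]
  · -- far apart
    intro i j hij
    intro a ha b hb pw
    by_contra hlen
    push_neg at hlen
    have hreach : G.Reachable a b := ⟨pw⟩
    have hdist : G.dist a b ≤ k := le_trans (SimpleGraph.dist_le pw) hlen
    have hcb : center G δℕ b = center G δℕ a :=
      center_eq_of_padded_close G δℕ k ha.2.1 hreach hdist
    rw [ha.2.2, hb.2.2] at hcb
    exact hij (e.symm.injective hcb.symm)
end

section
/- There exist constants c₁, c₂ > 0 such that the following holds. For every n ≥ 2, every finite simple graph G on at most n vertices, every subset S of the vertices of G, and every real x ≥ 1, there exists a cluster collection C₁,…,C_p in G with every C_i ⊆ S, with Steiner radius ⌈c₁·x·(log₂ n)²⌉ and congestion ⌈c₂·log₂ n⌉, such that |C₁ ∪ … ∪ C_p| ≥ (1 − 1/x)·|S| and dist_G(C_i, C_j) > 1 for all 1 ≤ i ≠ j ≤ p (i.e., no two distinct clusters are adjacent or intersecting). -/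
open SimpleGraph

namespace Carve
variable {V : Type} (G : SimpleGraph V)

lemma farApart_symm {k : ℕ} {A B : Set V} (h : FarApart G k A B) : FarApart G k B A := by
  intro u hu v hv p
  simpa using h v hv u hu p.reverse

lemma farApart_disjoint {A B : Set V} (h : FarApart G 1 A B) : Disjoint A B := by
  rw [Set.disjoint_left]
  intro a ha hb
  simpa using h a ha a hb Walk.nil

def ball (R : Set V) (v : V) : ℕ → Set V
  | 0 => {v}
  | k+1 => ball R v k ∪ {u | u ∈ R ∧ ∃ w ∈ ball R v k, G.Adj w u}

lemma ball_mono (R : Set V) (v : V) {k l : ℕ} (h : k ≤ l) : ball G R v k ⊆ ball G R v l := by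
  induction l with
  | zero => simp [Nat.le_zero.mp h]
  | succ l ih =>
    rcases Nat.lt_or_ge k (l+1) with h' | h'
    · exact (ih (Nat.lt_succ_iff.mp h')).trans (Set.subset_union_left)
    · have : k = l + 1 := le_antisymm h h'
      subst this; exact Set.Subset.rfl

lemma ball_subset (R : Set V) (v : V) (hv : v ∈ R) : ∀ k, ball G R v k ⊆ R := by
  intro k
  induction k with
  | zero => simpa [ball] using hv
  | succ k ih =>
    intro u hu
    rcases hu with hu | hu
    · exact ih hu
    · exact hu.1

lemma mem_ball_self (R : Set V) (v : V) (k : ℕ) : v ∈ ball G R v k :=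
  ball_mono G R v (Nat.zero_le k) rfl

lemma mem_ball_succ_of_adj (R : Set V) (v : V) {k : ℕ} {u w : V} (hu : u ∈ ball G R v k)
    (hw : w ∈ R) (h : G.Adj u w) : w ∈ ball G R v (k+1) :=
  Or.inr ⟨hw, u, hu, h⟩

lemma ball_walk (R : Set V) (v : V) (r : ℕ) :
    ∀ k (hk : k ≤ r) (u : V) (hu : u ∈ ball G R v k),
    ∃ w : (((⊤ : G.Subgraph).induce (ball G R v r)).coe).Walk
        ⟨v, mem_ball_self G R v r⟩ ⟨u, ball_mono G R v hk hu⟩,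
      w.length ≤ k := by
  intro k
  induction k with
  | zero =>
    intro _ u hu
    have : u = v := hu
    subst this
    exact ⟨Walk.nil, by simp⟩
  | succ k ih =>
    intro hk u hu
    rcases hu with hu | hu
    · obtain ⟨w, hw⟩ := ih (Nat.le_of_succ_le hk) u hu
      exact ⟨w, hw.trans (Nat.le_succ k)⟩
    · obtain ⟨huR, a, ha, hadj⟩ := hu
      obtain ⟨w, hw⟩ := ih (Nat.le_of_succ_le hk) a ha
      have hu' : u ∈ ball G R v r :=
        ball_mono G R v hk (mem_ball_succ_of_adj G R v ha huR hadj)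
      have hadj' : (((⊤ : G.Subgraph).induce (ball G R v r)).coe).Adj
          ⟨a, ball_mono G R v (Nat.le_of_succ_le hk) ha⟩ ⟨u, hu'⟩ := by
        simp [Subgraph.coe_adj, Subgraph.induce_adj, ball_mono G R v (Nat.le_of_succ_le hk) ha,
          hu', hadj]
      exact ⟨w.concat hadj', by simpa [Walk.length_concat] using Nat.succ_le_succ hw⟩

lemma ball_radius (R : Set V) (v : V) (r : ℕ) (β : ℕ) (hβ : 2 * r ≤ β)
    (u u' : (((⊤ : G.Subgraph).induce (ball G R v r)).verts)) :
    ∃ w : (((⊤ : G.Subgraph).induce (ball G R v r)).coe).Walk u u', w.length ≤ β := by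
  obtain ⟨w1, hw1⟩ := ball_walk G R v r r le_rfl u.1 u.2
  obtain ⟨w2, hw2⟩ := ball_walk G R v r r le_rfl u'.1 u'.2
  refine ⟨(w1.reverse.append w2).copy (by ext; rfl) (by ext; rfl), ?_⟩
  simp only [Walk.length_copy, Walk.length_append, Walk.length_reverse]
  omega

lemma congestion_of_disjoint {p : ℕ} (tr : Fin p → G.Subgraph)
    (h : ∀ i j, i ≠ j → Disjoint (tr i).verts (tr j).verts) (e : Sym2 V) :
    {i : Fin p | e ∈ (tr i).edgeSet}.ncard ≤ 1 := by
  have hsub : {i : Fin p | e ∈ (tr i).edgeSet}.Subsingleton := by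
    intro i hi j hj
    by_contra hij
    induction e with
    | _ a b =>
      have hai : a ∈ (tr i).verts := (tr i).edge_vert (Subgraph.mem_edgeSet.mp hi)
      have haj : a ∈ (tr j).verts := (tr j).edge_vert (Subgraph.mem_edgeSet.mp hj)
      exact Set.disjoint_left.mp (h i j hij) hai haj
  rcases hsub.eq_empty_or_singleton with h' | ⟨a, h'⟩ <;> simp [h']

variable [Fintype V]

lemma exists_radius (f : ℕ → ℕ) (x : ℝ) (hx : 1 ≤ x) (t : ℕ)
    (hf0 : 1 ≤ f 0) (hmono : ∀ k, (f k : ℝ) ≤ Fintype.card V)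
    (hbig : (Fintype.card V : ℝ) < (1 + 1/x)^t) :
    ∃ r < t, ((f (r+1)) : ℝ) ≤ (1 + 1/x) * (f r) := by
  by_contra hcon
  push_neg at hcon
  have hxpos : (0:ℝ) < 1 + 1/x := by positivity
  have key : ∀ k ≤ t, (1 + 1/x)^k ≤ (f k : ℝ) := by
    intro k hk
    induction k with
    | zero => simpa using (by exact_mod_cast hf0 : (1:ℝ) ≤ f 0)
    | succ k ih =>
      have h1 := hcon k (Nat.lt_of_succ_le hk)
      have h2 := ih (Nat.le_of_succ_le hk)
      calc (1+1/x)^(k+1) = (1+1/x)^k * (1+1/x) := by ring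
        _ ≤ (f k : ℝ) * (1+1/x) := by nlinarith
        _ ≤ f (k+1) := le_of_lt (by nlinarith)
  have := (key t le_rfl).trans (hmono t)
  linarith

/-- the empty cluster collection -/
def emptyCC (β κ : ℕ) : ClusterCollection G β κ where
  p := 0
  cluster := Fin.elim0
  tree := Fin.elim0
  disjoint := fun i => i.elim0
  subset_tree := fun i => i.elim0
  connected := fun i => i.elim0
  radius := fun i => i.elim0
  congestion := by
    intro e _
    have : {i : Fin 0 | e ∈ (Fin.elim0 i : G.Subgraph).edgeSet} = ∅ := by
      ext i; exact i.elim0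
    simp [this]

lemma carve (x : ℝ) (hx : 1 ≤ x) (t β κ : ℕ) (hκ : 1 ≤ κ) (hβ : 2 * t ≤ β)
    (hbig : (Fintype.card V : ℝ) < (1 + 1/x)^t) :
    ∀ N (S R : Set V), S.ncard ≤ N → S ⊆ R →
    ∃ CC : ClusterCollection G β κ,
      (∀ i, CC.cluster i ⊆ S) ∧ (∀ i, (CC.tree i).verts ⊆ R) ∧
      (∀ i j, i ≠ j → Disjoint (CC.tree i).verts (CC.tree j).verts) ∧
      ((1 - 1/x) * S.ncard ≤ ((⋃ i, CC.cluster i).ncard : ℝ)) ∧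
      (∀ i j, i ≠ j → FarApart G 1 (CC.cluster i) (CC.cluster j)) := by
  have hxpos : (0:ℝ) < x := lt_of_lt_of_le one_pos hx
  have h1x : (0:ℝ) ≤ 1 - 1/x := by
    have : 1/x ≤ 1 := div_le_one_of_le₀ hx (le_of_lt hxpos)
    linarith
  intro N
  induction N with
  | zero =>
    intro S R hS _
    have hSe : S = ∅ := by
      have := Set.ncard_eq_zero (Set.toFinite S) |>.mp (Nat.le_zero.mp hS)
      exact this
    refine ⟨emptyCC G β κ, fun i => i.elim0, fun i => i.elim0, fun i => i.elim0, ?_,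
      fun i => i.elim0⟩
    simp [emptyCC, hSe]
  | succ N ih =>
    intro S R hS hSR
    rcases Set.eq_empty_or_nonempty S with hSe | ⟨v, hv⟩
    · refine ⟨emptyCC G β κ, fun i => i.elim0, fun i => i.elim0, fun i => i.elim0, ?_,
        fun i => i.elim0⟩
      simp [emptyCC, hSe]
    have hvR : v ∈ R := hSR hv
    -- choose the radius
    obtain ⟨r, hrt, hr⟩ := exists_radius (fun k => (S ∩ ball G R v k).ncard) x hx t
      (by
        have : ({v} : Set V) ⊆ S ∩ ball G R v 0 := by
          intro a ha; rcases ha with rfl; exact ⟨hv, rfl⟩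
        simpa using Set.ncard_le_ncard this (Set.toFinite _))
      (fun k => by
        have h := Set.ncard_le_ncard (Set.subset_univ (S ∩ ball G R v k)) (Set.toFinite _)
        rw [Set.ncard_univ, Nat.card_eq_fintype_card] at h
        exact_mod_cast h) hbig
    set B := ball G R v r with hB
    set B1 := ball G R v (r+1) with hB1
    have hBB1 : B ⊆ B1 := ball_mono G R v (Nat.le_succ r)
    set C := S ∩ B with hC
    set S2 := S \ B1 with hS2def
    set R2 := R \ B with hR2def
    have hS2S : S2 ⊆ S := Set.diff_subset
    have hS2R2 : S2 ⊆ R2 := fun a ha => ⟨hSR ha.1, fun hB' => ha.2 (hBB1 hB')⟩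
    have hS2card : S2.ncard ≤ N := by
      have hss : S2 ⊂ S := by
        refine ⟨hS2S, fun hcon => ?_⟩
        have : v ∈ S2 := hcon hv
        exact this.2 (mem_ball_self G R v (r+1))
      have := Set.ncard_lt_ncard hss (Set.toFinite S)
      omega
    obtain ⟨CC, hcl, htr, htd, hcov, hfar⟩ := ih S2 R2 hS2card hS2R2
    -- the new tree
    set T : G.Subgraph := (⊤ : G.Subgraph).induce B with hT
    have hTverts : T.verts = B := rfl
    -- far apart between new cluster and old ones
    have hfarC : ∀ i, FarApart G 1 C (CC.cluster i) := by
      intro i u hu w hw p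
      have hwS2 : w ∈ S2 := hcl i hw
      by_contra hlen
      push_neg at hlen
      cases p with
      | nil => exact hwS2.2 (hBB1 hu.2)
      | cons hadj q =>
        have hq : q.length = 0 := by
          simp only [Walk.length_cons] at hlen; omega
        have hbw := q.eq_of_length_eq_zero hq
        subst hbw
        exact hwS2.2 (mem_ball_succ_of_adj G R v hu.2 (hSR hwS2.1) hadj)
    have hTdisj : ∀ i, Disjoint T.verts (CC.tree i).verts := by
      intro i
      rw [Set.disjoint_left]
      intro a haB hatr
      exact (htr i hatr).2 haB
    -- master facts for the extended family
    set cl' : Fin (CC.p + 1) → Set V := Fin.cons C CC.cluster with hcl'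
    set tr' : Fin (CC.p + 1) → G.Subgraph := Fin.cons T CC.tree with htr'
    have far' : ∀ i j, i ≠ j →
        FarApart G 1 (cl' i) (cl' j) := by
      intro i j hij
      induction i using Fin.cases with
      | zero =>
        induction j using Fin.cases with
        | zero => exact absurd rfl hij
        | succ j' => simpa [hcl'] using hfarC j'
      | succ i' =>
        induction j using Fin.cases with
        | zero => simpa [hcl'] using farApart_symm G (hfarC i')
        | succ j' =>
          have : i' ≠ j' := fun h => hij (by rw [h])
          simpa [hcl'] using hfar i' j' this
    have trdisj' : ∀ i j, i ≠ j →
        Disjoint (tr' i).verts (tr' j).verts := by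
      intro i j hij
      induction i using Fin.cases with
      | zero =>
        induction j using Fin.cases with
        | zero => exact absurd rfl hij
        | succ j' => simpa [htr'] using hTdisj j'
      | succ i' =>
        induction j using Fin.cases with
        | zero => simpa [htr'] using (hTdisj i').symm
        | succ j' =>
          have : i' ≠ j' := fun h => hij (by rw [h])
          simpa [htr'] using htd i' j' this
    refine ⟨⟨CC.p + 1, cl', tr',
      fun i j hij => farApart_disjoint G (far' i j hij), ?_, ?_, ?_, ?_⟩, ?_, ?_, trdisj', ?_, far'⟩
    · -- subset_tree
      intro i
      induction i using Fin.cases with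
      | zero =>
        simp only [hcl', htr', Fin.cons_zero]
        exact Set.inter_subset_right
      | succ i' => simpa [hcl', htr'] using CC.subset_tree i'
    · -- connected
      intro i
      induction i using Fin.cases with
      | zero =>
        intro a b
        obtain ⟨w, _⟩ := ball_radius G R v r β (by omega) a b
        exact ⟨w⟩
      | succ i' => exact CC.connected i'
    · -- radius
      intro i
      induction i using Fin.cases with
      | zero =>
        intro a b
        exact ball_radius G R v r β (by omega) a b
      | succ i' => exact CC.radius i'
    · -- congestion
      intro e he
      exact (congestion_of_disjoint G _ trdisj' e).trans hκ
    · -- clusters ⊆ S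
      intro i
      induction i using Fin.cases with
      | zero =>
        simp only [hcl', Fin.cons_zero]
        exact Set.inter_subset_left
      | succ i' => simpa [hcl'] using (hcl i').trans hS2S
    · -- tree verts ⊆ R
      intro i
      induction i using Fin.cases with
      | zero => exact ball_subset G R v hvR r
      | succ i' => simpa [htr'] using (htr i').trans Set.diff_subset
    · -- coverage
      have hUnion : (⋃ i, cl' i) = C ∪ ⋃ i, CC.cluster i := by
        ext a
        simp only [hcl', Set.mem_iUnion, Set.mem_union, Fin.exists_fin_succ, Fin.cons_zero,
          Fin.cons_succ]
      have hdisjU : Disjoint C (⋃ i, CC.cluster i) := by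
        rw [Set.disjoint_iUnion_right]
        exact fun i => farApart_disjoint G (hfarC i)
      have hcard : ((⋃ i, cl' i).ncard : ℝ)
          = C.ncard + ((⋃ i, CC.cluster i).ncard : ℝ) := by
        rw [hUnion, Set.ncard_union_eq hdisjU (Set.toFinite _) (Set.toFinite _)]
        push_cast; ring
      rw [hcard]
      have e1 : (S.ncard : ℝ) ≤ ((S ∩ B1).ncard : ℝ) + (S2.ncard : ℝ) := by
        have : S = (S ∩ B1) ∪ S2 := by
          rw [hS2def, Set.inter_union_diff]
        calc (S.ncard : ℝ) = (((S ∩ B1) ∪ S2).ncard : ℝ) := by rw [← this]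
          _ ≤ ((S ∩ B1).ncard : ℝ) + (S2.ncard : ℝ) := by
              exact_mod_cast Set.ncard_union_le _ _
      have e2 : ((S ∩ B1).ncard : ℝ) ≤ (1 + 1/x) * (C.ncard : ℝ) := hr
      have e3 := hcov
      have hc : (0:ℝ) ≤ (C.ncard : ℝ) := Nat.cast_nonneg _
      calc (1 - 1/x) * (S.ncard : ℝ)
          ≤ (1 - 1/x) * (((S ∩ B1).ncard : ℝ) + (S2.ncard : ℝ)) :=
            mul_le_mul_of_nonneg_left e1 h1x
        _ = (1 - 1/x) * ((S ∩ B1).ncard : ℝ) + (1 - 1/x) * (S2.ncard : ℝ) := by ring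
        _ ≤ (1 - 1/x) * ((1 + 1/x) * (C.ncard : ℝ)) + ((⋃ i, CC.cluster i).ncard : ℝ) :=
            add_le_add (mul_le_mul_of_nonneg_left e2 h1x) e3
        _ = (1 - (1/x)^2) * (C.ncard : ℝ) + ((⋃ i, CC.cluster i).ncard : ℝ) := by ring
        _ ≤ (C.ncard : ℝ) + ((⋃ i, CC.cluster i).ncard : ℝ) := by nlinarith [sq_nonneg (1/x)]

end Carve

theorem statement4 :
    ∃ c₁ c₂ : ℝ, 0 < c₁ ∧ 0 < c₂ ∧
      ∀ (n : ℕ), 2 ≤ n →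
      ∀ (V : Type) [Fintype V] (G : SimpleGraph V),
        Fintype.card V ≤ n →
        ∀ S : Set V, ∀ x : ℝ, 1 ≤ x →
          ∃ CC : ClusterCollection G
              ⌈c₁ * x * (Real.logb 2 n) ^ 2⌉₊
              ⌈c₂ * Real.logb 2 n⌉₊,
            (∀ i, CC.cluster i ⊆ S) ∧
            ((1 - 1 / x) * S.ncard ≤ ((⋃ i, CC.cluster i).ncard : ℝ)) ∧
            (∀ i j, i ≠ j → FarApart G 1 (CC.cluster i) (CC.cluster j)) := by
  refine ⟨8, 1, by norm_num, by norm_num, ?_⟩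
  intro n hn V _ G hcard S x hx
  have hx0 : (0:ℝ) < x := lt_of_lt_of_le one_pos hx
  have h2n : (2:ℝ) ≤ (n:ℝ) := by exact_mod_cast hn
  have hn0 : (0:ℝ) < (n:ℝ) := by linarith
  have hlog1 : (1:ℝ) ≤ Real.logb 2 n := by
    rw [Real.le_logb_iff_rpow_le (by norm_num) hn0]
    simpa using h2n
  set m : ℕ := ⌈x⌉₊ with hm
  set L : ℕ := Nat.log 2 n + 1 with hL
  set t : ℕ := m * L with ht
  set β : ℕ := ⌈8 * x * (Real.logb 2 n) ^ 2⌉₊ with hβdef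
  set κ : ℕ := ⌈1 * Real.logb 2 n⌉₊ with hκdef
  have hκ : 1 ≤ κ := Nat.one_le_ceil_iff.mpr (by linarith)
  have hmge : (x:ℝ) ≤ (m:ℝ) := Nat.le_ceil x
  have h2pow : (2:ℝ) ≤ (1 + 1/x)^m := by
    have h0x : (0:ℝ) ≤ 1/x := by positivity
    have hb := one_add_mul_le_pow (by linarith : (-2:ℝ) ≤ 1/x) m
    have h1 : (1:ℝ) ≤ (m:ℝ) * (1/x) := by
      rw [mul_one_div]
      exact (one_le_div hx0).mpr hmge
    linarith
  have hbig : (Fintype.card V : ℝ) < (1 + 1/x)^t := by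
    have hcV : (Fintype.card V : ℝ) ≤ (n:ℝ) := by exact_mod_cast hcard
    have hnlt : (n:ℝ) < (2:ℝ)^L := by exact_mod_cast Nat.lt_pow_succ_log_self one_lt_two n
    have h2L : (2:ℝ)^L ≤ (1 + 1/x)^t := by
      rw [ht, pow_mul]
      exact pow_le_pow_left₀ (by norm_num) h2pow L
    linarith
  have hmlt : (m:ℝ) ≤ x + 1 := le_of_lt (Nat.ceil_lt_add_one hx0.le)
  have hLle : ((L:ℕ):ℝ) ≤ Real.logb 2 n + 1 := by
    have h := Real.natLog_le_logb n 2
    push_cast at h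
    push_cast [hL]
    linarith
  have hβ : 2 * t ≤ β := by
    have h2t : ((2 * t : ℕ) : ℝ) ≤ 8 * x * (Real.logb 2 n) ^ 2 := by
      have hLcast : ((L:ℕ):ℝ) = (Nat.log 2 n : ℝ) + 1 := by push_cast [hL]; ring
      have hL0 : (0:ℝ) ≤ ((L:ℕ):ℝ) := Nat.cast_nonneg _
      have hmul : (m:ℝ) * L ≤ (x + 1) * (Real.logb 2 n + 1) :=
        mul_le_mul hmlt hLle hL0 (by linarith)
      rw [hLcast] at hmul
      push_cast [ht]
      nlinarith [hlog1, hx, mul_nonneg (sub_nonneg.mpr hlog1)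
        (mul_nonneg hx0.le (by linarith : (0:ℝ) ≤ Real.logb 2 n))]
    have := h2t.trans (Nat.le_ceil _)
    exact_mod_cast this
  obtain ⟨CC, hclS, _, _, hcov, hfar⟩ :=
    Carve.carve G x hx t β κ hκ hβ hbig S.ncard S Set.univ le_rfl (Set.subset_univ S)
  exact ⟨CC, hclS, hcov, hfar⟩
end
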